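/- arXiv:1106.1049 — 5 statements merged into one kernel-verified Lean document; each statement's English description precedes it below -/
import Mathlib

section
/- Let f : {-1,1}^n → ℝ be a pseudo-Boolean function with Fourier expansion f(x) = Σ_{I ∈ 𝓕} ŵ(I) χ_I(x), where 𝓕 is nonempty with |𝓕| = m, and suppose f has Fourier width ρ ≥ 0. Then ||f||_4 ≤ (2ρ + 1 - 2ρ/m)^{1/4} · ||f||_2; equivalently, E[f(x)^4] ≤ (2ρ + 1 - 2ρ/m) · E[f(x)^2]^2. -/
/-- The ±1 value of a Boolean coordinate. -/
noncomputable def sgn (b : Bool) : ℝ := if b then 1 else -1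

/-- Expectation of `g` over the uniform distribution on `{-1,1}^n`
(coordinates encoded as `Bool`). -/
noncomputable def pbExp (n : ℕ) (g : (Fin n → Bool) → ℝ) : ℝ :=
  (∑ x : Fin n → Bool, g x) / 2 ^ n

/-- The character `χ_I(x) = ∏_{i ∈ I} x_i`. -/
noncomputable def chi {n : ℕ} (I : Finset (Fin n)) (x : Fin n → Bool) : ℝ :=
  ∏ i ∈ I, sgn (x i)

/-- The `p`-norm `‖f‖_p = (E[|f(x)|^p])^{1/p}`. -/
noncomputable def pbNorm (n : ℕ) (p : ℝ) (f : (Fin n → Bool) → ℝ) : ℝ :=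
  (pbExp n (fun x => |f x| ^ p)) ^ (1 / p)

open scoped symmDiff






lemma sgn_mul_self (b : Bool) : sgn b * sgn b = 1 := by
  cases b <;> simp [sgn]

lemma sgn_not (b : Bool) : sgn (!b) = - sgn b := by
  cases b <;> simp [sgn]

lemma chi_mul {n : ℕ} (I J : Finset (Fin n)) (x : Fin n → Bool) :
    chi I x * chi J x = chi (symmDiff I J) x := by
  have key : ∀ (A B : Finset (Fin n)), Disjoint A B →
      chi (A ∪ B) x = chi A x * chi B x := fun A B h => Finset.prod_union h
  have hI : chi I x = chi (I \ J) x * chi (I ∩ J) x := by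
    rw [← key (I \ J) (I ∩ J) (Finset.sdiff_disjoint.mono_right Finset.inter_subset_right),
      Finset.sdiff_union_inter]
  have hJ : chi J x = chi (J \ I) x * chi (I ∩ J) x := by
    rw [← key (J \ I) (I ∩ J) (Finset.sdiff_disjoint.mono_right Finset.inter_subset_left),
      Finset.inter_comm, Finset.sdiff_union_inter]
  have hsq : chi (I ∩ J) x * chi (I ∩ J) x = 1 := by
    rw [chi, ← Finset.prod_mul_distrib]
    exact Finset.prod_eq_one fun i _ => sgn_mul_self (x i)
  have hsd : chi (symmDiff I J) x = chi (I \ J) x * chi (J \ I) x := by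
    rw [symmDiff_def, Finset.sup_eq_union]
    exact key _ _ (disjoint_sdiff_sdiff)
  rw [hI, hJ, hsd]
  linear_combination (chi (I \ J) x * chi (J \ I) x) * hsq

lemma chi_update {n : ℕ} (K : Finset (Fin n)) (x : Fin n → Bool) (i₀ : Fin n) (hi : i₀ ∈ K)
    (b : Bool) : chi K (Function.update x i₀ b) = sgn b * chi (K.erase i₀) x := by
  rw [chi, ← Finset.mul_prod_erase _ _ hi, Function.update_self]
  congr 1
  refine Finset.prod_congr rfl fun i hiK => ?_
  rw [Function.update_of_ne (Finset.ne_of_mem_erase hiK)]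

lemma sum_chi {n : ℕ} (K : Finset (Fin n)) :
    ∑ x : Fin n → Bool, chi K x = if K = ∅ then (2 ^ n : ℝ) else 0 := by
  split_ifs with h
  · subst h; simp [chi, Finset.card_univ]
  · obtain ⟨i₀, hi₀⟩ := Finset.nonempty_iff_ne_empty.2 h
    have hinv : Function.Involutive (fun x : Fin n → Bool => Function.update x i₀ (!x i₀)) := by
      intro x
      simp only [Function.update_self]
      ext i
      rcases eq_or_ne i i₀ with rfl | hne
      · simp
      · simp [Function.update_of_ne hne]
    have h1 : (∑ x : Fin n → Bool, chi K (Function.update x i₀ (!x i₀)))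
        = ∑ x : Fin n → Bool, chi K x :=
      Fintype.sum_bijective _ hinv.bijective _ _ (fun x => rfl)
    have h2 : ∀ x : Fin n → Bool, chi K (Function.update x i₀ (!x i₀)) = - chi K x := by
      intro x
      rw [chi_update K x i₀ hi₀, sgn_not, neg_mul, ← chi_update K x i₀ hi₀ (x i₀)]
      congr 1
      rw [Function.update_eq_self]
    simp only [h2, Finset.sum_neg_distrib] at h1
    linarith

lemma pbExp_chi {n : ℕ} (K : Finset (Fin n)) :
    pbExp n (chi K) = if K = ∅ then (1 : ℝ) else 0 := by
  rw [pbExp, sum_chi]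
  split_ifs <;> simp

lemma pbExp_sum {n : ℕ} {α : Type*} (s : Finset α) (F : α → (Fin n → Bool) → ℝ) :
    pbExp n (fun x => ∑ a ∈ s, F a x) = ∑ a ∈ s, pbExp n (F a) := by
  simp only [pbExp]
  rw [Finset.sum_comm, Finset.sum_div]

lemma symmDiff_eq_empty {α : Type*} [DecidableEq α] {s t : Finset α} :
    symmDiff s t = ∅ ↔ s = t := by
  rw [← Finset.bot_eq_empty, symmDiff_eq_bot]

lemma pbExp_const_mul {n : ℕ} (c : ℝ) (g : (Fin n → Bool) → ℝ) :
    pbExp n (fun x => c * g x) = c * pbExp n g := by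
  simp [pbExp, ← Finset.mul_sum, mul_div_assoc]

lemma pbExp_nonneg {n : ℕ} {g : (Fin n → Bool) → ℝ} (hg : ∀ x, 0 ≤ g x) :
    0 ≤ pbExp n g :=
  div_nonneg (Finset.sum_nonneg fun x _ => hg x) (by positivity)

lemma sum_diag {α : Type*} [DecidableEq α] (s : Finset α) (g : α × α → ℝ) :
    ∑ p ∈ (s ×ˢ s).filter (fun p => p.1 = p.2), g p = ∑ a ∈ s, g (a, a) := by
  rw [Finset.sum_filter, Finset.sum_product]
  calc ∑ a ∈ s, ∑ b ∈ s, (if a = b then g (a, b) else 0)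
      = ∑ a ∈ s, ∑ b ∈ s, (if a = b then g (a, a) else 0) := by
        refine Finset.sum_congr rfl fun a _ => Finset.sum_congr rfl fun b _ => ?_
        split_ifs with h
        · rw [h]
        · rfl
    _ = ∑ a ∈ s, g (a, a) := by
        refine Finset.sum_congr rfl fun a ha => ?_
        rw [Finset.sum_ite_eq s a (fun _ => g (a, a)), if_pos ha]

lemma count_pairs {n ρ : ℕ} (𝓕 : Finset (Finset (Fin n)))
    (hρ : ∀ i : Fin n, (𝓕.filter (fun I => i ∈ I)).card ≤ ρ)
    (D : Finset (Fin n)) (hD : D ≠ ∅) :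
    ((𝓕 ×ˢ 𝓕).filter (fun q => symmDiff q.1 q.2 = D)).card ≤ 2 * ρ := by
  obtain ⟨i₀, hi₀⟩ := Finset.nonempty_iff_ne_empty.2 hD
  set T := (𝓕.filter (fun I => i₀ ∈ I)) ×ˢ (Finset.univ : Finset Bool) with hT
  have hcard : T.card ≤ 2 * ρ := by
    rw [hT, Finset.card_product, Finset.card_univ]
    have : Fintype.card Bool = 2 := by simp
    rw [this]
    calc (𝓕.filter (fun I => i₀ ∈ I)).card * 2 ≤ ρ * 2 :=
          Nat.mul_le_mul_right 2 (hρ i₀)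
      _ = 2 * ρ := Nat.mul_comm ρ 2
  refine le_trans (Finset.card_le_card_of_injOn
    (fun q => if i₀ ∈ q.1 then (q.1, true) else (q.2, false)) ?_ ?_) hcard
  · intro q hq
    rw [Finset.mem_coe, Finset.mem_filter, Finset.mem_product] at hq
    obtain ⟨⟨h1, h2⟩, h3⟩ := hq
    have hmem : i₀ ∈ symmDiff q.1 q.2 := h3 ▸ hi₀
    rw [Finset.mem_symmDiff] at hmem
    dsimp only
    split_ifs with h
    · rw [hT]; simp [Finset.mem_product, h1, h]
    · have : i₀ ∈ q.2 := by tauto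
      rw [hT]; simp [Finset.mem_product, h2, this]
  · intro q hq q' hq' heq
    simp only [Finset.coe_filter, Set.mem_setOf_eq, Finset.mem_product] at hq hq'
    have key : ∀ r : Finset (Fin n) × Finset (Fin n), symmDiff r.1 r.2 = D →
        r.2 = symmDiff r.1 D ∧ r.1 = symmDiff D r.2 := by
      intro r hr
      constructor
      · rw [← hr, symmDiff_symmDiff_cancel_left]
      · rw [← hr]
        exact (symmDiff_symmDiff_cancel_right _ _).symm
    obtain ⟨k1, k2⟩ := key q hq.2
    obtain ⟨k1', k2'⟩ := key q' hq'.2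
    by_cases h : i₀ ∈ q.1 <;> by_cases h' : i₀ ∈ q'.1 <;>
      simp only [h, h', if_pos, if_neg, if_true, if_false, Prod.mk.injEq] at heq
    · exact Prod.ext heq.1 (by rw [k1, k1', heq.1])
    · exact absurd heq.2 (by simp)
    · exact absurd heq.2 (by simp)
    · exact Prod.ext (by rw [k2, k2', heq.1]) heq.1



lemma pbNorm_four (n : ℕ) (f : (Fin n → Bool) → ℝ) :
    pbNorm n 4 f = (pbExp n (fun x => f x ^ 4)) ^ ((1 : ℝ) / 4) := by
  have key : (fun x : Fin n → Bool => |f x| ^ (4:ℝ)) = fun x => f x ^ 4 := by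
    funext x
    rw [show ((4 : ℝ)) = ((4 : ℕ) : ℝ) by norm_num, Real.rpow_natCast, pow_abs,
      abs_of_nonneg (by positivity : (0:ℝ) ≤ f x ^ (4:ℕ))]
  rw [pbNorm, key]

lemma pbNorm_two (n : ℕ) (f : (Fin n → Bool) → ℝ) :
    pbNorm n 2 f = (pbExp n (fun x => f x ^ 2)) ^ ((1 : ℝ) / 2) := by
  have key : (fun x : Fin n → Bool => |f x| ^ (2:ℝ)) = fun x => f x ^ 2 := by
    funext x
    rw [show ((2 : ℝ)) = ((2 : ℕ) : ℝ) by norm_num, Real.rpow_natCast, pow_abs,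
      abs_of_nonneg (by positivity : (0:ℝ) ≤ f x ^ (2:ℕ))]
  rw [pbNorm, key]


/-- **(4,2)-Hypercontractive Inequality for bounded Fourier width.**
If `f : {-1,1}^n → ℝ` has Fourier expansion `f = ∑_{I ∈ 𝓕} ŵ(I) χ_I` with `𝓕` nonempty,
`|𝓕| = m`, and every coordinate `i` appears in at most `ρ` sets of `𝓕` (Fourier width `ρ`),
then `‖f‖₄ ≤ (2ρ + 1 - 2ρ/m)^{1/4} ‖f‖₂`; equivalently
`E[f(x)^4] ≤ (2ρ + 1 - 2ρ/m) E[f(x)^2]^2`. -/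
theorem hypercontractive_42_width (n m ρ : ℕ)
    (𝓕 : Finset (Finset (Fin n))) (h𝓕 : 𝓕.Nonempty) (hm : 𝓕.card = m)
    (w : Finset (Fin n) → ℝ) (hw : ∀ I ∈ 𝓕, w I ≠ 0)
    (f : (Fin n → Bool) → ℝ) (hf : ∀ x, f x = ∑ I ∈ 𝓕, w I * chi I x)
    (hρ : ∀ i : Fin n, (𝓕.filter (fun I => i ∈ I)).card ≤ ρ) :
    pbNorm n 4 f ≤ ((2 * ρ + 1 - 2 * ρ / m : ℝ)) ^ ((1 : ℝ) / 4) * pbNorm n 2 f ∧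
    pbExp n (fun x => f x ^ 4) ≤
      (2 * ρ + 1 - 2 * ρ / m : ℝ) * (pbExp n (fun x => f x ^ 2)) ^ 2 := by
  set P := 𝓕 ×ˢ 𝓕 with hP
  set S := ∑ I ∈ 𝓕, w I ^ 2 with hS
  set c := (2 * ρ + 1 - 2 * ρ / m : ℝ) with hc
  -- Fourier expansion of f^2
  have hf2 : ∀ x, f x ^ 2 = ∑ p ∈ P, (w p.1 * w p.2) * chi (symmDiff p.1 p.2) x := by
    intro x
    rw [sq, hf, Finset.sum_mul_sum, hP, Finset.sum_product]
    refine Finset.sum_congr rfl fun I _ => Finset.sum_congr rfl fun J _ => ?_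
    rw [← chi_mul]; ring
  -- E[f^2] = S
  have hE2 : pbExp n (fun x => f x ^ 2) = S := by
    have : pbExp n (fun x => f x ^ 2)
        = ∑ p ∈ P, (w p.1 * w p.2) * pbExp n (chi (symmDiff p.1 p.2)) := by
      calc pbExp n (fun x => f x ^ 2)
          = pbExp n (fun x => ∑ p ∈ P, (w p.1 * w p.2) * chi (symmDiff p.1 p.2) x) := by
            congr 1; funext x; exact hf2 x
        _ = ∑ p ∈ P, pbExp n (fun x => (w p.1 * w p.2) * chi (symmDiff p.1 p.2) x) :=
            pbExp_sum P _
        _ = _ := Finset.sum_congr rfl fun p _ => pbExp_const_mul _ _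
    rw [this]
    simp only [pbExp_chi, symmDiff_eq_empty, mul_ite, mul_one, mul_zero]
    rw [hP, Finset.sum_product]
    rw [hS]
    refine Finset.sum_congr rfl fun I hI => ?_
    rw [Finset.sum_ite_eq 𝓕 I (fun J => w I * w J), if_pos hI, sq]
  -- E[f^4] as a quadruple sum
  have hE4 : pbExp n (fun x => f x ^ 4)
      = ∑ p ∈ P, ∑ q ∈ P, (if symmDiff p.1 p.2 = symmDiff q.1 q.2
          then (w p.1 * w p.2) * (w q.1 * w q.2) else 0) := by
    have hf4 : ∀ x, f x ^ 4 = ∑ p ∈ P, ∑ q ∈ P,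
        ((w p.1 * w p.2) * (w q.1 * w q.2)) *
          chi (symmDiff (symmDiff p.1 p.2) (symmDiff q.1 q.2)) x := by
      intro x
      have : f x ^ 4 = (f x ^ 2) * (f x ^ 2) := by ring
      rw [this, hf2, Finset.sum_mul_sum]
      refine Finset.sum_congr rfl fun p _ => Finset.sum_congr rfl fun q _ => ?_
      rw [← chi_mul (symmDiff p.1 p.2) (symmDiff q.1 q.2) x]; ring
    calc pbExp n (fun x => f x ^ 4)
        = ∑ p ∈ P, pbExp n (fun x => ∑ q ∈ P,
            ((w p.1 * w p.2) * (w q.1 * w q.2)) *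
              chi (symmDiff (symmDiff p.1 p.2) (symmDiff q.1 q.2)) x) := by
          rw [show (fun x => f x ^ 4) = (fun x => ∑ p ∈ P, ∑ q ∈ P,
            ((w p.1 * w p.2) * (w q.1 * w q.2)) *
              chi (symmDiff (symmDiff p.1 p.2) (symmDiff q.1 q.2)) x) from funext hf4]
          exact pbExp_sum P _
      _ = ∑ p ∈ P, ∑ q ∈ P, ((w p.1 * w p.2) * (w q.1 * w q.2)) *
            pbExp n (chi (symmDiff (symmDiff p.1 p.2) (symmDiff q.1 q.2))) := by
          refine Finset.sum_congr rfl fun p _ => ?_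
          rw [pbExp_sum]
          exact Finset.sum_congr rfl fun q _ => pbExp_const_mul _ _
      _ = _ := by
          refine Finset.sum_congr rfl fun p _ => Finset.sum_congr rfl fun q _ => ?_
          rw [pbExp_chi]
          simp only [symmDiff_eq_empty]
          split_ifs <;> simp
  -- basic facts
  set P₁ := P.filter (fun p => ¬ p.1 = p.2) with hP₁
  set T := ∑ I ∈ 𝓕, w I ^ 4 with hT
  have hm1 : 1 ≤ m := hm ▸ Finset.card_pos.2 h𝓕
  have hm0 : (0 : ℝ) < m := by exact_mod_cast Nat.lt_of_lt_of_le Nat.zero_lt_one hm1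
  have hSnn : 0 ≤ S := Finset.sum_nonneg fun I _ => sq_nonneg _
  have hdiagW : ∑ q ∈ P, (if q.1 = q.2 then w q.1 * w q.2 else 0) = S := by
    rw [← Finset.sum_filter, hP, sum_diag 𝓕 (fun q => w q.1 * w q.2), hS]
    exact Finset.sum_congr rfl fun I _ => by ring
  have hdiagV : ∑ p ∈ P.filter (fun p => p.1 = p.2), (w p.1) ^ 2 * (w p.2) ^ 2 = T := by
    rw [hP, sum_diag 𝓕 (fun q => (w q.1) ^ 2 * (w q.2) ^ 2), hT]
    exact Finset.sum_congr rfl fun I _ => by ring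
  have hVtot : ∑ p ∈ P, (w p.1) ^ 2 * (w p.2) ^ 2 = S * S := by
    rw [hP, hS, Finset.sum_mul_sum, Finset.sum_product]
  -- split the quadruple sum into diagonal and off-diagonal parts
  have hsplit : ∑ p ∈ P, ∑ q ∈ P, (if symmDiff p.1 p.2 = symmDiff q.1 q.2
          then (w p.1 * w p.2) * (w q.1 * w q.2) else 0)
      = (∑ p ∈ P.filter (fun p => p.1 = p.2), ∑ q ∈ P,
          (if symmDiff p.1 p.2 = symmDiff q.1 q.2
            then (w p.1 * w p.2) * (w q.1 * w q.2) else 0))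
        + ∑ p ∈ P₁, ∑ q ∈ P,
          (if symmDiff p.1 p.2 = symmDiff q.1 q.2
            then (w p.1 * w p.2) * (w q.1 * w q.2) else 0) :=
    (Finset.sum_filter_add_sum_filter_not P _ _).symm
  -- diagonal part equals S * S
  have hA1 : ∑ p ∈ P.filter (fun p => p.1 = p.2), ∑ q ∈ P,
      (if symmDiff p.1 p.2 = symmDiff q.1 q.2
        then (w p.1 * w p.2) * (w q.1 * w q.2) else 0) = S * S := by
    rw [hP, sum_diag]
    have key : ∀ a ∈ 𝓕, (∑ q ∈ P, if symmDiff a a = symmDiff q.1 q.2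
        then (w a * w a) * (w q.1 * w q.2) else 0) = (w a * w a) * S := by
      intro a _
      rw [← hdiagW, Finset.mul_sum]
      refine Finset.sum_congr rfl fun q _ => ?_
      have hcond : (symmDiff a a = symmDiff q.1 q.2) ↔ q.1 = q.2 := by
        rw [symmDiff_self, Finset.bot_eq_empty, eq_comm, symmDiff_eq_empty]
      simp only [hcond, mul_ite, mul_zero]
    rw [Finset.sum_congr rfl key, ← Finset.sum_mul, hS]
    congr 1
    exact Finset.sum_congr rfl fun I _ => by ring
  -- off-diagonal part
  have hoffne : ∀ p ∈ P₁, symmDiff p.1 p.2 ≠ ∅ := by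
    intro p hp
    rw [Ne, symmDiff_eq_empty]
    exact (Finset.mem_filter.1 hp).2
  have hB0 : ∑ p ∈ P₁, ∑ q ∈ P,
        (if symmDiff p.1 p.2 = symmDiff q.1 q.2
          then (w p.1 * w p.2) * (w q.1 * w q.2) else 0)
      = ∑ p ∈ P₁, ∑ q ∈ P₁,
        (if symmDiff p.1 p.2 = symmDiff q.1 q.2
          then (w p.1 * w p.2) * (w q.1 * w q.2) else 0) := by
    refine Finset.sum_congr rfl fun p hp => ?_
    rw [hP₁, Finset.sum_filter]
    refine Finset.sum_congr rfl fun q _ => ?_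
    by_cases hq : q.1 = q.2
    · rw [if_neg (fun hcon => hoffne p hp
        (by rw [hcon, hq, symmDiff_self, Finset.bot_eq_empty])),
        if_neg (not_not_intro hq)]
    · rw [if_pos hq]
  -- AM-GM step
  have hAMGM : ∑ p ∈ P₁, ∑ q ∈ P₁,
        (if symmDiff p.1 p.2 = symmDiff q.1 q.2
          then (w p.1 * w p.2) * (w q.1 * w q.2) else 0)
      ≤ ∑ p ∈ P₁, ∑ q ∈ P₁,
        (if symmDiff p.1 p.2 = symmDiff q.1 q.2
          then ((w p.1) ^ 2 * (w p.2) ^ 2 + (w q.1) ^ 2 * (w q.2) ^ 2) / 2 else 0) := by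
    refine Finset.sum_le_sum fun p _ => Finset.sum_le_sum fun q _ => ?_
    split_ifs
    · nlinarith [sq_nonneg (w p.1 * w p.2 - w q.1 * w q.2)]
    · exact le_rfl
  -- symmetry of the two halves
  have hswap : ∑ p ∈ P₁, ∑ q ∈ P₁,
        (if symmDiff p.1 p.2 = symmDiff q.1 q.2 then (w q.1) ^ 2 * (w q.2) ^ 2 else 0)
      = ∑ p ∈ P₁, ∑ q ∈ P₁,
        (if symmDiff p.1 p.2 = symmDiff q.1 q.2 then (w p.1) ^ 2 * (w p.2) ^ 2 else 0) := by
    rw [Finset.sum_comm]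
    refine Finset.sum_congr rfl fun p _ => Finset.sum_congr rfl fun q _ => ?_
    exact if_congr eq_comm rfl rfl
  have hhalf : ∑ p ∈ P₁, ∑ q ∈ P₁,
        (if symmDiff p.1 p.2 = symmDiff q.1 q.2
          then ((w p.1) ^ 2 * (w p.2) ^ 2 + (w q.1) ^ 2 * (w q.2) ^ 2) / 2 else 0)
      = ∑ p ∈ P₁, ∑ q ∈ P₁,
        (if symmDiff p.1 p.2 = symmDiff q.1 q.2 then (w p.1) ^ 2 * (w p.2) ^ 2 else 0) := by
    have expand : ∀ p q : Finset (Fin n) × Finset (Fin n),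
        (if symmDiff p.1 p.2 = symmDiff q.1 q.2
          then ((w p.1) ^ 2 * (w p.2) ^ 2 + (w q.1) ^ 2 * (w q.2) ^ 2) / 2 else 0)
        = ((if symmDiff p.1 p.2 = symmDiff q.1 q.2 then (w p.1) ^ 2 * (w p.2) ^ 2 else 0)
          + (if symmDiff p.1 p.2 = symmDiff q.1 q.2 then (w q.1) ^ 2 * (w q.2) ^ 2 else 0))
            / 2 := by
      intro p q
      split_ifs <;> norm_num
    simp only [expand]
    simp only [← Finset.sum_div, Finset.sum_add_distrib]
    rw [hswap]
    ring
  -- counting step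
  have hcount : ∑ p ∈ P₁, ∑ q ∈ P₁,
        (if symmDiff p.1 p.2 = symmDiff q.1 q.2 then (w p.1) ^ 2 * (w p.2) ^ 2 else 0)
      ≤ (2 * ρ : ℝ) * (S * S - T) := by
    have hinner : ∀ p ∈ P₁, ∑ q ∈ P₁,
        (if symmDiff p.1 p.2 = symmDiff q.1 q.2 then (w p.1) ^ 2 * (w p.2) ^ 2 else 0)
        ≤ (2 * ρ : ℝ) * ((w p.1) ^ 2 * (w p.2) ^ 2) := by
      intro p hp
      rw [← Finset.sum_filter, Finset.sum_const, nsmul_eq_mul]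
      have hsub : P₁.filter (fun q => symmDiff p.1 p.2 = symmDiff q.1 q.2)
          ⊆ P.filter (fun q => symmDiff q.1 q.2 = symmDiff p.1 p.2) := by
        intro q hq
        rw [Finset.mem_filter] at hq ⊢
        exact ⟨Finset.mem_of_mem_filter q hq.1, hq.2.symm⟩
      have hcard : ((P₁.filter
          (fun q => symmDiff p.1 p.2 = symmDiff q.1 q.2)).card : ℝ) ≤ (2 * ρ : ℝ) := by
        have h1 := Finset.card_le_card hsub
        have h2 := count_pairs 𝓕 hρ (symmDiff p.1 p.2) (hoffne p hp)
        rw [← hP] at h2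
        have := le_trans h1 h2
        calc ((P₁.filter (fun q => symmDiff p.1 p.2 = symmDiff q.1 q.2)).card : ℝ)
            ≤ ((2 * ρ : ℕ) : ℝ) := by exact_mod_cast this
          _ = (2 * ρ : ℝ) := by push_cast; ring
      exact mul_le_mul_of_nonneg_right hcard (by positivity)
    calc ∑ p ∈ P₁, ∑ q ∈ P₁,
          (if symmDiff p.1 p.2 = symmDiff q.1 q.2 then (w p.1) ^ 2 * (w p.2) ^ 2 else 0)
        ≤ ∑ p ∈ P₁, (2 * ρ : ℝ) * ((w p.1) ^ 2 * (w p.2) ^ 2) :=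
          Finset.sum_le_sum hinner
      _ = (2 * ρ : ℝ) * ∑ p ∈ P₁, (w p.1) ^ 2 * (w p.2) ^ 2 := by
          rw [Finset.mul_sum]
      _ = (2 * ρ : ℝ) * (S * S - T) := by
          have := Finset.sum_filter_add_sum_filter_not P (fun p => p.1 = p.2)
            (fun p => (w p.1) ^ 2 * (w p.2) ^ 2)
          rw [← hP₁] at this
          rw [hVtot, hdiagV] at this
          have h3 : ∑ p ∈ P₁, (w p.1) ^ 2 * (w p.2) ^ 2 = S * S - T := by linarith
          rw [h3]
  -- Cauchy-Schwarz: S^2 ≤ m * T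
  have hcs : S ^ 2 ≤ (m : ℝ) * T := by
    have h := sq_sum_le_card_mul_sum_sq (s := 𝓕) (f := fun I => w I ^ 2)
    rw [hm] at h
    calc S ^ 2 = (∑ I ∈ 𝓕, w I ^ 2) ^ 2 := by rw [hS]
      _ ≤ (m : ℝ) * ∑ I ∈ 𝓕, (w I ^ 2) ^ 2 := h
      _ = (m : ℝ) * T := by
          rw [hT]
          congr 1
          exact Finset.sum_congr rfl fun I _ => by ring
  -- main bound on E[f^4]
  have hE4le : pbExp n (fun x => f x ^ 4) ≤ c * S ^ 2 := by
    have hdivle : 2 * (ρ : ℝ) / m * S ^ 2 ≤ 2 * (ρ : ℝ) * T := by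
      rw [div_mul_eq_mul_div, div_le_iff₀ hm0]
      have hρnn : (0 : ℝ) ≤ 2 * (ρ : ℝ) := by positivity
      nlinarith [hcs]
    calc pbExp n (fun x => f x ^ 4)
        = (∑ p ∈ P.filter (fun p => p.1 = p.2), ∑ q ∈ P,
            (if symmDiff p.1 p.2 = symmDiff q.1 q.2
              then (w p.1 * w p.2) * (w q.1 * w q.2) else 0))
          + ∑ p ∈ P₁, ∑ q ∈ P,
            (if symmDiff p.1 p.2 = symmDiff q.1 q.2
              then (w p.1 * w p.2) * (w q.1 * w q.2) else 0) := by rw [hE4, hsplit]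
      _ ≤ S * S + (2 * ρ : ℝ) * (S * S - T) := by
          rw [hA1, hB0]
          have := le_trans hAMGM (le_of_eq hhalf)
          have := le_trans this hcount
          linarith
      _ ≤ c * S ^ 2 := by
          rw [hc]
          nlinarith [hdivle]
  have hE4nn : 0 ≤ pbExp n (fun x => f x ^ 4) :=
    pbExp_nonneg fun x => by positivity
  have hcnn : (0 : ℝ) ≤ c := by
    have : 2 * (ρ : ℝ) / m ≤ 2 * (ρ : ℝ) := by
      apply div_le_self (by positivity)
      exact_mod_cast hm1
    rw [hc]; linarith
  constructor
  · -- norm form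
    rw [pbNorm_four, pbNorm_two, hE2]
    calc (pbExp n (fun x => f x ^ 4)) ^ ((1 : ℝ) / 4)
        ≤ (c * S ^ 2) ^ ((1 : ℝ) / 4) :=
          Real.rpow_le_rpow hE4nn hE4le (by norm_num)
      _ = c ^ ((1 : ℝ) / 4) * (S ^ 2) ^ ((1 : ℝ) / 4) :=
          Real.mul_rpow hcnn (sq_nonneg S)
      _ = c ^ ((1 : ℝ) / 4) * S ^ ((1 : ℝ) / 2) := by
          congr 1
          rw [← Real.rpow_natCast S 2, ← Real.rpow_mul hSnn]
          norm_num
  · rw [hE2]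
    exact hE4le
end

section
/- Let f : {-1,1}^n → ℝ be a pseudo-Boolean function of Fourier width ρ ≥ 1. Then for each positive integer r, ||f||_{2r} ≤ ((2r)! · ρ^{r-1})^{1/(2r)} · ||f||_2; equivalently, E[f(x)^{2r}] ≤ (2r)! · ρ^{r-1} · E[f(x)^2]^r. -/
open Finset

/-- `(2m)^m ≤ (2m)!` -/
lemma HC.two_m_pow_le_factorial (m : ℕ) : (2*m)^m ≤ (2*m).factorial := by
  have h1 : (2*m).factorial = ∏ i ∈ range (2*m), (i+1) := by
    rw [Finset.prod_range_add_one_eq_factorial]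
  have h2 : ∏ i ∈ range (2*m), (i+1) = (∏ i ∈ range m, (i+1)) * ∏ i ∈ range m, (m+i+1) := by
    rw [two_mul, Finset.prod_range_add]
  have h3 : ∏ i ∈ range m, (m+i+1) = ∏ i ∈ range m, (2*m - i) := by
    rw [← Finset.prod_range_reflect (fun i => m+i+1) m]
    apply Finset.prod_congr rfl
    intro i hi; simp only [mem_range] at hi; omega
  calc (2*m)^m = ∏ _i ∈ range m, (2*m) := by rw [Finset.prod_const, Finset.card_range]
    _ ≤ ∏ i ∈ range m, ((i+1) * (2*m - i)) := by
        apply Finset.prod_le_prod'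
        intro i hi; simp only [mem_range] at hi
        rcases Nat.eq_zero_or_pos i with h | h
        · subst h; omega
        · calc 2*m ≤ 2*(2*m - i) := by omega
            _ ≤ (i+1) * (2*m-i) := Nat.mul_le_mul_right _ (by omega)
    _ = (∏ i ∈ range m, (i+1)) * ∏ i ∈ range m, (2*m - i) := by
        rw [← Finset.prod_mul_distrib]
    _ = (2*m).factorial := by rw [← h3, ← h2, h1]

/-- `r^m ≤ m^m * C(r,m)` -/
lemma HC.pow_le_pow_mul_choose {m r : ℕ} (h : m ≤ r) : r^m ≤ m^m * r.choose m := by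
  have key : r^m * m.factorial ≤ m^m * r.descFactorial m := by
    have h1 : r.descFactorial m = ∏ i ∈ range m, (r - (m - 1 - i)) := by
      rw [Nat.descFactorial_eq_prod_range, ← Finset.prod_range_reflect (fun i => r - i) m]
    have h2 : r^m * m.factorial = ∏ i ∈ range m, (r * (i+1)) := by
      rw [Finset.prod_mul_distrib, Finset.prod_const, Finset.card_range,
        Finset.prod_range_add_one_eq_factorial]
    have h3 : m^m * r.descFactorial m = ∏ i ∈ range m, (m * (r - (m - 1 - i))) := by
      rw [h1, Finset.prod_mul_distrib, Finset.prod_const, Finset.card_range]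
    rw [h2, h3]
    apply Finset.prod_le_prod'
    intro i hi; simp only [mem_range] at hi
    set k := m - 1 - i with hk
    have hik : i + 1 + k = m := by omega
    have hkr : k ≤ r := by omega
    zify [hkr]
    have h5 : (0:ℤ) ≤ (k:ℤ) := by positivity
    have h6 : (0:ℤ) ≤ (r:ℤ) - (m:ℤ) := by
      have := h; omega
    nlinarith [mul_nonneg h5 h6]
  rw [Nat.descFactorial_eq_factorial_mul_choose] at key
  have := Nat.factorial_pos m
  calc r^m = r^m * m.factorial / m.factorial := by rw [Nat.mul_div_cancel _ this]
    _ ≤ m^m * (m.factorial * r.choose m) / m.factorial := Nat.div_le_div_right key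
    _ = m^m * r.choose m := by
        rw [show m^m * (m.factorial * r.choose m) = (m^m * r.choose m) * m.factorial by ring,
          Nat.mul_div_cancel _ this]

/-- `C(2r,2m)^r ≤ C(r,m)^r * (2r)!^m`  (main combinatorial inequality) -/
lemma HC.choose_pow_le {m r : ℕ} (h : m ≤ r) :
    ((2*r).choose (2*m))^r ≤ (r.choose m)^r * ((2*r).factorial)^m := by
  -- Step A : (2r)^m ≤ C(r,m) * (2m)!
  have hA : (2*r)^m ≤ r.choose m * (2*m).factorial := by
    calc (2*r)^m = 2^m * r^m := by rw [mul_pow]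
      _ ≤ 2^m * (m^m * r.choose m) := Nat.mul_le_mul_left _ (HC.pow_le_pow_mul_choose h)
      _ = (2*m)^m * r.choose m := by rw [mul_pow]; ring
      _ ≤ (2*m).factorial * r.choose m := Nat.mul_le_mul_right _ (HC.two_m_pow_le_factorial m)
      _ = r.choose m * (2*m).factorial := by ring
  -- Step B : C(2r,2m) ≤ C(r,m) * (2r)^m
  have hB : (2*r).choose (2*m) ≤ r.choose m * (2*r)^m := by
    have h1 : (2*r).choose (2*m) * (2*m).factorial ≤ (2*r)^(2*m) := by
      rw [mul_comm, ← Nat.descFactorial_eq_factorial_mul_choose]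
      exact Nat.descFactorial_le_pow _ _
    have h2 : (2*r).choose (2*m) * (2*m).factorial ≤ r.choose m * (2*r)^m * (2*m).factorial := by
      calc (2*r).choose (2*m) * (2*m).factorial ≤ (2*r)^(2*m) := h1
        _ = (2*r)^m * (2*r)^m := by rw [← pow_add]; ring_nf
        _ ≤ (2*r)^m * (r.choose m * (2*m).factorial) := Nat.mul_le_mul_left _ hA
        _ = r.choose m * (2*r)^m * (2*m).factorial := by ring
    exact Nat.le_of_mul_le_mul_right h2 (Nat.factorial_pos _)
  calc ((2*r).choose (2*m))^r ≤ (r.choose m * (2*r)^m)^r := Nat.pow_le_pow_left hB r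
    _ = (r.choose m)^r * ((2*r)^r)^m := by rw [mul_pow, ← pow_mul, ← pow_mul, Nat.mul_comm r m]
    _ ≤ (r.choose m)^r * ((2*r).factorial)^m :=
        Nat.mul_le_mul_left _ (Nat.pow_le_pow_left (HC.two_m_pow_le_factorial r) m)



namespace HC
open Finset

variable {n : ℕ}

lemma sgn_mul_self (b : Bool) : sgn b * sgn b = 1 := by cases b <;> simp [sgn]
lemma sgn_not (b : Bool) : sgn (!b) = - sgn b := by cases b <;> simp [sgn]
lemma abs_sgn (b : Bool) : |sgn b| = 1 := by cases b <;> simp [sgn]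

lemma card_cube : (Fintype.card (Fin n → Bool) : ℝ) = 2 ^ n := by
  simp [Fintype.card_fun]

lemma pbExp_nonneg {g : (Fin n → Bool) → ℝ} (h : ∀ x, 0 ≤ g x) : 0 ≤ pbExp n g := by
  unfold pbExp
  apply div_nonneg _ (by positivity)
  exact Finset.sum_nonneg fun x _ => h x

lemma pbExp_mono {g₁ g₂ : (Fin n → Bool) → ℝ} (h : ∀ x, g₁ x ≤ g₂ x) :
    pbExp n g₁ ≤ pbExp n g₂ := by
  unfold pbExp
  have hs : ∑ x : Fin n → Bool, g₁ x ≤ ∑ x : Fin n → Bool, g₂ x :=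
    Finset.sum_le_sum fun x _ => h x
  have hp : (0:ℝ) < 2 ^ n := by positivity
  exact div_le_div_of_nonneg_right hs hp.le

lemma pbExp_congr {g₁ g₂ : (Fin n → Bool) → ℝ} (h : ∀ x, g₁ x = g₂ x) :
    pbExp n g₁ = pbExp n g₂ := by
  unfold pbExp; congr 1; exact Finset.sum_congr rfl fun x _ => h x

lemma pbExp_const (c : ℝ) : pbExp n (fun _ => c) = c := by
  unfold pbExp
  rw [Finset.sum_const, Finset.card_univ, nsmul_eq_mul, card_cube]
  field_simp

lemma pbExp_sum {ι : Type*} (s : Finset ι) (F : ι → (Fin n → Bool) → ℝ) :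
    pbExp n (fun x => ∑ i ∈ s, F i x) = ∑ i ∈ s, pbExp n (F i) := by
  unfold pbExp
  rw [Finset.sum_comm, Finset.sum_div]

lemma pbExp_smul (c : ℝ) (g : (Fin n → Bool) → ℝ) :
    pbExp n (fun x => c * g x) = c * pbExp n g := by
  unfold pbExp
  rw [← Finset.mul_sum, mul_div_assoc]

/-- flip coordinate `i` -/
def flip (i : Fin n) (x : Fin n → Bool) : Fin n → Bool := Function.update x i (!(x i))

lemma flip_invol (i : Fin n) : Function.Involutive (flip i) := by
  intro x
  funext j
  by_cases hj : j = i
  · subst hj; simp [flip, Function.update]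
  · simp [flip, Function.update, hj]

lemma sum_flip (i : Fin n) (G : (Fin n → Bool) → ℝ) :
    ∑ x : Fin n → Bool, G (flip i x) = ∑ x : Fin n → Bool, G x :=
  Function.Bijective.sum_comp (flip_invol i).bijective G

lemma flip_apply_ne (i : Fin n) (x : Fin n → Bool) {j : Fin n} (h : j ≠ i) :
    flip i x j = x j := by simp [flip, Function.update, h]

lemma flip_apply_self (i : Fin n) (x : Fin n → Bool) : flip i x i = !(x i) := by
  simp [flip]

lemma chi_flip_not_mem {I : Finset (Fin n)} {i : Fin n} (h : i ∉ I) (x : Fin n → Bool) :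
    chi I (flip i x) = chi I x := by
  unfold chi
  apply Finset.prod_congr rfl
  intro j hj
  rw [flip_apply_ne i x (by rintro rfl; exact h hj)]

lemma chi_flip_mem {I : Finset (Fin n)} {i : Fin n} (h : i ∈ I) (x : Fin n → Bool) :
    chi I (flip i x) = - chi I x := by
  unfold chi
  rw [← Finset.mul_prod_erase _ _ h, ← Finset.mul_prod_erase _ (fun j => sgn (x j)) h,
    flip_apply_self, sgn_not]
  have : ∀ j ∈ I.erase i, sgn (flip i x j) = sgn (x j) := by
    intro j hj
    rw [flip_apply_ne i x (Finset.ne_of_mem_erase hj)]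
  rw [Finset.prod_congr rfl this]
  ring

lemma chi_empty (x : Fin n → Bool) : chi (∅ : Finset (Fin n)) x = 1 := by simp [chi]

lemma abs_chi (I : Finset (Fin n)) (x : Fin n → Bool) : |chi I x| = 1 := by
  unfold chi
  rw [Finset.abs_prod]
  simp [abs_sgn]

lemma chi_mul_self (I : Finset (Fin n)) (x : Fin n → Bool) : chi I x * chi I x = 1 := by
  unfold chi
  rw [← Finset.prod_mul_distrib]
  exact Finset.prod_eq_one fun i _ => sgn_mul_self (x i)

lemma chi_mul (I J : Finset (Fin n)) (x : Fin n → Bool) :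
    chi I x * chi J x = chi (symmDiff I J) x := by
  have hI : chi I x = chi (I \ J) x * chi (I ∩ J) x := by
    unfold chi
    rw [← Finset.prod_union (Finset.disjoint_sdiff_inter I J), Finset.sdiff_union_inter]
  have hJ : chi J x = chi (J \ I) x * chi (J ∩ I) x := by
    unfold chi
    rw [← Finset.prod_union (Finset.disjoint_sdiff_inter J I), Finset.sdiff_union_inter]
  have hsymm : chi (symmDiff I J) x = chi (I \ J) x * chi (J \ I) x := by
    unfold chi
    rw [← Finset.prod_union (disjoint_sdiff_sdiff)]
    rfl
  have hinter : I ∩ J = J ∩ I := Finset.inter_comm I J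
  rw [hI, hJ, hsymm, hinter]
  have h4 := chi_mul_self (J ∩ I) x
  rw [show (chi (I \ J) x * chi (J ∩ I) x) * (chi (J \ I) x * chi (J ∩ I) x)
      = (chi (I \ J) x * chi (J \ I) x) * (chi (J ∩ I) x * chi (J ∩ I) x) from by ring,
    h4, mul_one]

lemma pbExp_chi (A : Finset (Fin n)) :
    pbExp n (chi A) = if A = ∅ then 1 else 0 := by
  by_cases hA : A = ∅
  · subst hA
    rw [if_pos rfl, pbExp_congr (fun x => chi_empty x), pbExp_const]
  · rw [if_neg hA]
    obtain ⟨i, hi⟩ := Finset.nonempty_iff_ne_empty.mpr hA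
    have key : ∑ x : Fin n → Bool, chi A x = - ∑ x : Fin n → Bool, chi A x := by
      conv_lhs => rw [← sum_flip i (chi A)]
      rw [Finset.sum_congr rfl fun x _ => chi_flip_mem hi x, Finset.sum_neg_distrib]
    have : ∑ x : Fin n → Bool, chi A x = 0 := by linarith
    unfold pbExp
    rw [this]; simp

lemma pbExp_chi_mul (I J : Finset (Fin n)) :
    pbExp n (fun x => chi I x * chi J x) = if I = J then 1 else 0 := by
  rw [pbExp_congr (fun x => chi_mul I J x), pbExp_chi]
  have : symmDiff I J = ∅ ↔ I = J := by
    rw [← Finset.bot_eq_empty]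
    exact symmDiff_eq_bot
  by_cases h : I = J
  · rw [if_pos (this.mpr h), if_pos h]
  · rw [if_neg (fun hh => h (this.mp hh)), if_neg h]

/-- Parseval -/
lemma pbExp_parseval (G : Finset (Finset (Fin n))) (v u : Finset (Fin n) → ℝ) :
    pbExp n (fun x => (∑ I ∈ G, v I * chi I x) * (∑ J ∈ G, u J * chi J x)) =
    ∑ I ∈ G, v I * u I := by
  have h1 : ∀ x : Fin n → Bool, (∑ I ∈ G, v I * chi I x) * (∑ J ∈ G, u J * chi J x)
      = ∑ I ∈ G, ∑ J ∈ G, (v I * u J) * (chi I x * chi J x) := by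
    intro x
    rw [Finset.sum_mul_sum]
    exact Finset.sum_congr rfl fun I _ => Finset.sum_congr rfl fun J _ => by ring
  rw [pbExp_congr h1, pbExp_sum]
  have h2 : ∀ I ∈ G, pbExp n (fun x => ∑ J ∈ G, (v I * u J) * (chi I x * chi J x))
      = v I * u I := by
    intro I hI
    rw [pbExp_sum]
    have h3 : ∀ J ∈ G, pbExp n (fun x => (v I * u J) * (chi I x * chi J x))
        = if I = J then v I * u I else 0 := by
      intro J hJ
      rw [pbExp_smul, pbExp_chi_mul]
      by_cases h : I = J
      · subst h; simp
      · simp [h]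
    rw [Finset.sum_congr rfl h3, Finset.sum_ite_eq G I (fun J => v I * u I), if_pos hI]
  exact Finset.sum_congr rfl h2

end HC

open Finset Real

lemma HCchoose_pow_le {m r : ℕ} (h : m ≤ r) :
    ((2*r).choose (2*m))^r ≤ (r.choose m)^r * ((2*r).factorial)^m :=
  HC.choose_pow_le h

/-- the coefficient inequality, real form -/
lemma HCcoeff_le {m r : ℕ} (hm : m ≤ r) (hr : 0 < r) :
    ((2*r).choose (2*m) : ℝ) * ((2*r).factorial : ℝ) ^ ((m:ℝ)/r) ≤
      ((2*r).factorial : ℝ) * (r.choose m : ℝ) := by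
  set F : ℝ := ((2*r).factorial : ℝ) with hF
  have hF0 : (0:ℝ) ≤ F := by positivity
  have hnat : ((2*r).choose (2*m))^r * ((2*r).factorial)^m ≤
      ((2*r).factorial)^r * (r.choose m)^r := by
    have h1 := HCchoose_pow_le (m := r - m) (r := r) (by omega)
    rw [show 2*(r-m) = 2*r - 2*m by omega, Nat.choose_symm (by omega),
      Nat.choose_symm hm] at h1
    calc ((2*r).choose (2*m))^r * ((2*r).factorial)^m
        ≤ ((r.choose m)^r * ((2*r).factorial)^(r-m)) * ((2*r).factorial)^m :=
          Nat.mul_le_mul_right _ h1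
      _ = (r.choose m)^r * ((2*r).factorial)^(r-m+m) := by rw [mul_assoc, pow_add]
      _ = ((2*r).factorial)^r * (r.choose m)^r := by rw [show r-m+m = r by omega]; ring
  have hX : (0:ℝ) ≤ ((2*r).choose (2*m) : ℝ) * F ^ ((m:ℝ)/r) := by positivity
  have hY : (0:ℝ) ≤ F * (r.choose m : ℝ) := by positivity
  apply le_of_pow_le_pow_left₀ hr.ne' hY
  have hpow : (F ^ ((m:ℝ)/r)) ^ r = F ^ m := by
    rw [← Real.rpow_natCast (F ^ ((m:ℝ)/r)) r, ← Real.rpow_mul hF0,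
      show ((m:ℝ)/r) * r = (m:ℕ) by field_simp, Real.rpow_natCast]
  rw [mul_pow, hpow, mul_pow]
  calc ((2*r).choose (2*m) : ℝ)^r * F^m
      = ((((2*r).choose (2*m))^r * ((2*r).factorial)^m : ℕ) : ℝ) := by push_cast; ring
    _ ≤ ((((2*r).factorial)^r * (r.choose m)^r : ℕ) : ℝ) := by exact_mod_cast hnat
    _ = F^r * ((r.choose m : ℝ))^r := by push_cast; ring

/-- Hölder for pbExp -/
lemma HCpbExp_holder {ι : Type*} [Fintype ι] (N : ℝ) (hN : 0 < N)
    (F G : ι → ℝ) (hF : ∀ x, 0 ≤ F x) (hG : ∀ x, 0 ≤ G x)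
    (a b r : ℕ) (hab : a + b = r) (hr : 0 < r) :
    (∑ x : ι, F x ^ a * G x ^ b) / N ≤
      ((∑ x : ι, F x ^ r) / N) ^ ((a:ℝ)/r) * ((∑ x : ι, G x ^ r) / N) ^ ((b:ℝ)/r) := by
  have hSF : (0:ℝ) ≤ ∑ x : ι, F x ^ r := Finset.sum_nonneg fun x _ => pow_nonneg (hF x) r
  have hSG : (0:ℝ) ≤ ∑ x : ι, G x ^ r := Finset.sum_nonneg fun x _ => pow_nonneg (hG x) r
  have hrne : ((r:ℝ)) ≠ 0 := by positivity
  rcases Nat.eq_zero_or_pos a with ha | ha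
  · subst ha
    have hbr : b = r := by omega
    subst hbr
    simp only [pow_zero, one_mul, Nat.cast_zero, zero_div, Real.rpow_zero,
      div_self hrne, Real.rpow_one]
    exact le_refl _
  rcases Nat.eq_zero_or_pos b with hb | hb
  · subst hb
    have har : a = r := by omega
    subst har
    simp only [pow_zero, mul_one, Nat.cast_zero, zero_div, Real.rpow_zero,
      div_self hrne, Real.rpow_one]
    exact le_refl _
  -- main case
  have key : ∑ x : ι, F x ^ a * G x ^ b ≤
      (∑ x : ι, F x ^ r) ^ ((a:ℝ)/r) * (∑ x : ι, G x ^ r) ^ ((b:ℝ)/r) := by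
    have hpq : Real.HolderConjugate ((r:ℝ)/a) ((r:ℝ)/b) := by
      rw [Real.holderConjugate_iff]
      constructor
      · rw [lt_div_iff₀ (by positivity)]
        rw [one_mul]
        exact_mod_cast (by omega : a < r)
      · rw [inv_div, inv_div]
        field_simp
        push_cast [← hab]
        ring
    have key := Real.inner_le_Lp_mul_Lq_of_nonneg Finset.univ hpq
      (f := fun x => F x ^ a) (g := fun x => G x ^ b)
      (fun x _ => pow_nonneg (hF x) a) (fun x _ => pow_nonneg (hG x) b)
    have e1 : ∀ x : ι, (F x ^ a) ^ ((r:ℝ)/a) = F x ^ r := by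
      intro x
      rw [← Real.rpow_natCast (F x) a, ← Real.rpow_mul (hF x), ← Real.rpow_natCast (F x) r]
      congr 1
      field_simp
    have e2 : ∀ x : ι, (G x ^ b) ^ ((r:ℝ)/b) = G x ^ r := by
      intro x
      rw [← Real.rpow_natCast (G x) b, ← Real.rpow_mul (hG x), ← Real.rpow_natCast (G x) r]
      congr 1
      field_simp
    calc ∑ x : ι, F x ^ a * G x ^ b
        ≤ (∑ x : ι, (F x ^ a) ^ ((r:ℝ)/a)) ^ (1/((r:ℝ)/a)) *
          (∑ x : ι, (G x ^ b) ^ ((r:ℝ)/b)) ^ (1/((r:ℝ)/b)) := key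
      _ = (∑ x : ι, F x ^ r) ^ ((a:ℝ)/r) * (∑ x : ι, G x ^ r) ^ ((b:ℝ)/r) := by
          rw [one_div_div, one_div_div]
          congr 1
          · congr 1; exact Finset.sum_congr rfl fun x _ => e1 x
          · congr 1; exact Finset.sum_congr rfl fun x _ => e2 x
  have hsum : (a:ℝ)/r + (b:ℝ)/r = 1 := by
    field_simp
    push_cast [← hab]
    ring
  have hsplit : ((∑ x : ι, F x ^ r) / N) ^ ((a:ℝ)/r) * ((∑ x : ι, G x ^ r) / N) ^ ((b:ℝ)/r)
      = ((∑ x : ι, F x ^ r) ^ ((a:ℝ)/r) * (∑ x : ι, G x ^ r) ^ ((b:ℝ)/r)) / N := by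
    rw [Real.div_rpow hSF hN.le, Real.div_rpow hSG hN.le, div_mul_div_comm,
      ← Real.rpow_add hN, hsum, Real.rpow_one]
  rw [hsplit]
  exact div_le_div_of_nonneg_right key hN.le

namespace HC

lemma pow_rpow_div {T : ℝ} (hT : 0 ≤ T) {c r : ℕ} (hr : 0 < r) :
    (T ^ r) ^ ((c:ℝ)/r) = T ^ c := by
  have hrne : ((r:ℝ)) ≠ 0 := by positivity
  rw [← Real.rpow_natCast T r, ← Real.rpow_mul hT,
    show ((r:ℕ):ℝ) * ((c:ℝ)/r) = ((c:ℕ):ℝ) by field_simp, Real.rpow_natCast]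

lemma pbExp_holder {n : ℕ} (F G : (Fin n → Bool) → ℝ)
    (hF : ∀ x, 0 ≤ F x) (hG : ∀ x, 0 ≤ G x)
    (a b r : ℕ) (hab : a + b = r) (hr : 0 < r) :
    pbExp n (fun x => F x ^ a * G x ^ b) ≤
      (pbExp n (fun x => F x ^ r)) ^ ((a:ℝ)/r) * (pbExp n (fun x => G x ^ r)) ^ ((b:ℝ)/r) :=
  HCpbExp_holder (2^n) (by positivity) F G hF hG a b r hab hr

lemma main_bound {n : ℕ} (ρ r : ℕ) (hρ1 : 1 ≤ ρ) (hr : 0 < r) :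
    ∀ s : Finset (Fin n), ∀ 𝓖 : Finset (Finset (Fin n)), (∀ I ∈ 𝓖, I ⊆ s) →
    (∀ i : Fin n, ((𝓖.filter (fun I => i ∈ I)).card ≤ ρ)) →
    ∀ v : Finset (Fin n) → ℝ,
    pbExp n (fun x => (∑ I ∈ 𝓖, v I * chi I x) ^ (2*r)) ≤
      (((2*r).factorial * ρ^(r-1) : ℕ) : ℝ) * (∑ I ∈ 𝓖, (v I)^2) ^ r := by
  intro s
  induction s using Finset.strongInduction with
  | _ s ih =>
  intro 𝓖 hsub hwidth v
  have hN1 : (1:ℝ) ≤ (((2*r).factorial * ρ^(r-1) : ℕ) : ℝ) := by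
    have h1 : 1 ≤ (2*r).factorial * ρ^(r-1) :=
      Nat.one_le_iff_ne_zero.mpr (Nat.mul_ne_zero (Nat.factorial_ne_zero _)
        (by positivity))
    exact_mod_cast h1
  rcases Finset.eq_empty_or_nonempty s with rfl | ⟨i, hi⟩
  · -- base case
    have hsing : 𝓖 ⊆ {∅} := fun I hI =>
      Finset.mem_singleton.mpr (Finset.subset_empty.mp (hsub I hI))
    rcases Finset.subset_singleton_iff.mp hsing with rfl | rfl
    · simp only [Finset.sum_empty]
      rw [pbExp_congr (g₂ := fun _ => (0:ℝ)) (fun x => by rw [zero_pow (by omega)]),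
        pbExp_const, zero_pow hr.ne', mul_zero]
    · simp only [Finset.sum_singleton]
      rw [pbExp_congr (g₂ := fun _ => (v ∅)^(2*r)) (fun x => by rw [chi_empty, mul_one]),
        pbExp_const]
      have e1 : (v ∅)^(2*r) = ((v ∅)^2)^r := by rw [← pow_mul]
      rw [e1]
      exact le_mul_of_one_le_left (by positivity) hN1
  · -- inductive step
    set N : ℝ := (((2*r).factorial * ρ^(r-1) : ℕ) : ℝ) with hNdef
    set G0 := 𝓖.filter (fun I => ¬ i ∈ I) with hG0
    set G1 := 𝓖.filter (fun I => i ∈ I) with hG1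
    set g : (Fin n → Bool) → ℝ := fun x => ∑ I ∈ G0, v I * chi I x with hgdef
    set q : (Fin n → Bool) → ℝ := fun x => ∑ I ∈ G1, v I * chi I x with hqdef
    set T0 := ∑ I ∈ G0, (v I)^2 with hT0def
    set T1 := ∑ I ∈ G1, (v I)^2 with hT1def
    have hfgq : ∀ x, (∑ I ∈ 𝓖, v I * chi I x) = g x + q x := by
      intro x
      rw [hgdef, hqdef, add_comm]
      exact (Finset.sum_filter_add_sum_filter_not 𝓖 (fun I => i ∈ I) _).symm
    have hT : ∑ I ∈ 𝓖, (v I)^2 = T0 + T1 := by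
      rw [hT0def, hT1def, add_comm]
      exact (Finset.sum_filter_add_sum_filter_not 𝓖 (fun I => i ∈ I) _).symm
    have hT0 : 0 ≤ T0 := Finset.sum_nonneg fun I _ => sq_nonneg (v I)
    have hT1 : 0 ≤ T1 := Finset.sum_nonneg fun I _ => sq_nonneg (v I)
    -- IH for g
    have hEg : pbExp n (fun x => g x ^ (2*r)) ≤ N * T0 ^ r := by
      apply ih (s.erase i) (Finset.erase_ssubset hi) G0
      · intro I hI
        obtain ⟨hI𝓖, hIi⟩ := Finset.mem_filter.mp hI
        exact Finset.subset_erase.mpr ⟨hsub I hI𝓖, hIi⟩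
      · intro j
        exact le_trans (Finset.card_le_card
          (Finset.filter_subset_filter _ (Finset.filter_subset _ 𝓖))) (hwidth j)
    -- Parseval for q
    have hEq2 : pbExp n (fun x => q x ^ 2) = T1 := by
      rw [pbExp_congr (g₂ := fun x => (∑ I ∈ G1, v I * chi I x) * (∑ J ∈ G1, v J * chi J x))
        (fun x => by rw [hqdef, sq]), pbExp_parseval]
      exact Finset.sum_congr rfl fun I _ => (sq (v I)).symm ▸ rfl
    -- pointwise bound on q
    have hq2 : ∀ x, q x ^ 2 ≤ (ρ:ℝ) * T1 := by
      intro x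
      have h1 : |q x| ≤ ∑ I ∈ G1, |v I| := by
        calc |q x| ≤ ∑ I ∈ G1, |v I * chi I x| := Finset.abs_sum_le_sum_abs _ _
          _ = ∑ I ∈ G1, |v I| := Finset.sum_congr rfl fun I _ => by
              rw [abs_mul, abs_chi, mul_one]
      have h2 : q x ^ 2 ≤ (∑ I ∈ G1, |v I|) ^ 2 := by
        rw [← sq_abs]
        exact pow_le_pow_left₀ (abs_nonneg _) h1 2
      have h3 : (∑ I ∈ G1, |v I|) ^ 2 ≤ (G1.card : ℝ) * ∑ I ∈ G1, |v I| ^ 2 :=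
        sq_sum_le_card_mul_sum_sq
      have h4 : ∑ I ∈ G1, |v I| ^ 2 = T1 := Finset.sum_congr rfl fun I _ => sq_abs (v I)
      have h5 : (G1.card : ℝ) ≤ (ρ:ℝ) := by exact_mod_cast hwidth i
      calc q x ^ 2 ≤ (G1.card : ℝ) * ∑ I ∈ G1, |v I| ^ 2 := le_trans h2 h3
        _ = (G1.card : ℝ) * T1 := by rw [h4]
        _ ≤ (ρ:ℝ) * T1 := mul_le_mul_of_nonneg_right h5 hT1
    -- few-term moment bound for q
    have hEq : pbExp n (fun x => q x ^ (2*r)) ≤ (ρ:ℝ)^(r-1) * T1 ^ r := by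
      have hpt : ∀ x, q x ^ (2*r) ≤ ((ρ:ℝ) * T1)^(r-1) * q x ^ 2 := by
        intro x
        calc q x ^ (2*r) = (q x ^ 2) ^ r := by rw [← pow_mul]
          _ = (q x ^ 2) ^ (r-1) * q x ^ 2 := by
              rw [← pow_succ, show r - 1 + 1 = r by omega]
          _ ≤ ((ρ:ℝ) * T1)^(r-1) * q x ^ 2 :=
              mul_le_mul_of_nonneg_right
                (pow_le_pow_left₀ (sq_nonneg _) (hq2 x) (r-1)) (sq_nonneg _)
      calc pbExp n (fun x => q x ^ (2*r))
          ≤ pbExp n (fun x => ((ρ:ℝ) * T1)^(r-1) * q x ^ 2) := pbExp_mono hpt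
        _ = ((ρ:ℝ) * T1)^(r-1) * T1 := by rw [pbExp_smul, hEq2]
        _ = (ρ:ℝ)^(r-1) * T1 ^ r := by
            rw [mul_pow, mul_assoc, ← pow_succ, show r - 1 + 1 = r by omega]
    have hEg0 : 0 ≤ pbExp n (fun x => g x ^ (2*r)) :=
      pbExp_nonneg fun x => by rw [pow_mul]; positivity
    have hEq0 : 0 ≤ pbExp n (fun x => q x ^ (2*r)) :=
      pbExp_nonneg fun x => by rw [pow_mul]; positivity
    -- vanishing of odd terms
    have hvanish : ∀ a b : ℕ, Odd b → pbExp n (fun x => g x ^ a * q x ^ b) = 0 := by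
      intro a b hb
      have hflipg : ∀ x, g (flip i x) = g x := by
        intro x
        apply Finset.sum_congr rfl
        intro I hI
        rw [chi_flip_not_mem (Finset.mem_filter.mp hI).2 x]
      have hflipq : ∀ x, q (flip i x) = - q x := by
        intro x
        have : ∀ I ∈ G1, v I * chi I (flip i x) = - (v I * chi I x) := by
          intro I hI
          rw [chi_flip_mem (Finset.mem_filter.mp hI).2 x]
          ring
        rw [hqdef]
        simp only []
        rw [Finset.sum_congr rfl this, Finset.sum_neg_distrib]
      have key : ∑ x : Fin n → Bool, g x ^ a * q x ^ b
          = - ∑ x : Fin n → Bool, g x ^ a * q x ^ b := by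
        conv_lhs => rw [← sum_flip i (fun x => g x ^ a * q x ^ b)]
        calc ∑ x : Fin n → Bool, g (flip i x) ^ a * q (flip i x) ^ b
            = ∑ x : Fin n → Bool, - (g x ^ a * q x ^ b) := by
              apply Finset.sum_congr rfl
              intro x _
              rw [hflipg x, hflipq x, Odd.neg_pow hb]
              ring
          _ = - ∑ x : Fin n → Bool, g x ^ a * q x ^ b := Finset.sum_neg_distrib _
      have hzero : ∑ x : Fin n → Bool, g x ^ a * q x ^ b = 0 := by linarith
      unfold pbExp
      rw [hzero, zero_div]
    -- binomial expansion
    have hbin : pbExp n (fun x => (∑ I ∈ 𝓖, v I * chi I x) ^ (2*r))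
        = ∑ k ∈ Finset.range (2*r+1),
            ((2*r).choose k : ℝ) * pbExp n (fun x => g x ^ k * q x ^ (2*r - k)) := by
      rw [pbExp_congr (g₂ := fun x => ∑ k ∈ Finset.range (2*r+1),
          ((2*r).choose k : ℝ) * (g x ^ k * q x ^ (2*r - k)))
        (fun x => by
          rw [hfgq x, add_pow]
          exact Finset.sum_congr rfl fun k _ => by ring)]
      rw [pbExp_sum]
      exact Finset.sum_congr rfl fun k _ => pbExp_smul _ _
    -- restrict to even k
    have himg : (Finset.range (2*r+1)).filter (fun k => Even k)
        = (Finset.range (r+1)).image (fun m => 2*m) := by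
      ext k
      simp only [Finset.mem_filter, Finset.mem_range, Finset.mem_image]
      constructor
      · rintro ⟨hk, c, hc⟩
        exact ⟨c, by omega, by omega⟩
      · rintro ⟨m, hm, rfl⟩
        exact ⟨by omega, ⟨m, by omega⟩⟩
    have heven : ∑ k ∈ Finset.range (2*r+1),
          ((2*r).choose k : ℝ) * pbExp n (fun x => g x ^ k * q x ^ (2*r - k))
        = ∑ m ∈ Finset.range (r+1),
          ((2*r).choose (2*m) : ℝ) * pbExp n (fun x => g x ^ (2*m) * q x ^ (2*r - 2*m)) := by
      rw [← Finset.sum_filter_of_ne (p := fun k => Even k)]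
      · rw [himg, Finset.sum_image (fun a _ b _ hab => by omega)]
      · intro k hk hne
        by_contra hkodd
        apply hne
        have hodd : Odd (2*r - k) := by
          apply Nat.Even.sub_odd (by simp at hk; omega) ⟨r, by ring⟩
          exact Nat.odd_iff.mpr (by
            rcases Nat.even_or_odd k with he | ho
            · exact absurd he hkodd
            · exact Nat.odd_iff.mp ho)
        rw [hvanish k (2*r - k) hodd, mul_zero]
    -- per-term bound
    have hterm : ∀ m ∈ Finset.range (r+1),
        ((2*r).choose (2*m) : ℝ) * pbExp n (fun x => g x ^ (2*m) * q x ^ (2*r - 2*m))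
          ≤ N * ((r.choose m : ℝ) * (T0 ^ m * T1 ^ (r-m))) := by
      intro m hm
      have hmr : m ≤ r := by simp at hm; omega
      have hrne : ((r:ℝ)) ≠ 0 := by positivity
      have hP : (0:ℝ) < (ρ:ℝ)^(r-1) := by positivity
      -- Hölder
      have hhold : pbExp n (fun x => g x ^ (2*m) * q x ^ (2*r - 2*m))
          ≤ (pbExp n (fun x => g x ^ (2*r))) ^ ((m:ℝ)/r) *
            (pbExp n (fun x => q x ^ (2*r))) ^ (((r-m:ℕ):ℝ)/r) := by
        have e1 : (fun x => g x ^ (2*m) * q x ^ (2*r - 2*m))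
            = fun x => (g x ^ 2) ^ m * (q x ^ 2) ^ (r - m) := by
          funext x
          rw [← pow_mul, ← pow_mul, show 2*(r-m) = 2*r - 2*m by omega]
        have e2 : (fun x => (g x ^ 2) ^ r) = fun x => g x ^ (2*r) := by
          funext x; rw [← pow_mul]
        have e3 : (fun x => (q x ^ 2) ^ r) = fun x => q x ^ (2*r) := by
          funext x; rw [← pow_mul]
        have := pbExp_holder (fun x => g x ^ 2) (fun x => q x ^ 2)
          (fun x => sq_nonneg _) (fun x => sq_nonneg _) m (r - m) r (by omega) hr
        rw [e2, e3] at this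
        rw [e1]
        exact this
      have hmono : (pbExp n (fun x => g x ^ (2*r))) ^ ((m:ℝ)/r) *
            (pbExp n (fun x => q x ^ (2*r))) ^ (((r-m:ℕ):ℝ)/r)
          ≤ (N * T0 ^ r) ^ ((m:ℝ)/r) * ((ρ:ℝ)^(r-1) * T1 ^ r) ^ (((r-m:ℕ):ℝ)/r) := by
        apply mul_le_mul
        · exact Real.rpow_le_rpow hEg0 hEg (by positivity)
        · exact Real.rpow_le_rpow hEq0 hEq (by positivity)
        · exact Real.rpow_nonneg hEq0 _
        · exact Real.rpow_nonneg (by positivity) _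
      have hNsplit : (N * T0 ^ r) ^ ((m:ℝ)/r)
          = ((2*r).factorial : ℝ) ^ ((m:ℝ)/r) * ((ρ:ℝ)^(r-1)) ^ ((m:ℝ)/r) * T0 ^ m := by
        have : N = ((2*r).factorial : ℝ) * (ρ:ℝ)^(r-1) := by rw [hNdef]; push_cast; ring
        rw [this, Real.mul_rpow (by positivity) (by positivity),
          Real.mul_rpow (by positivity) hP.le, pow_rpow_div hT0 hr]
      have hPsplit : ((ρ:ℝ)^(r-1) * T1 ^ r) ^ (((r-m:ℕ):ℝ)/r)
          = ((ρ:ℝ)^(r-1)) ^ (((r-m:ℕ):ℝ)/r) * T1 ^ (r-m) := by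
        rw [Real.mul_rpow hP.le (by positivity), pow_rpow_div hT1 hr]
      have hPP : ((ρ:ℝ)^(r-1)) ^ ((m:ℝ)/r) * ((ρ:ℝ)^(r-1)) ^ (((r-m:ℕ):ℝ)/r)
          = (ρ:ℝ)^(r-1) := by
        rw [← Real.rpow_add hP, show (m:ℝ)/r + ((r-m:ℕ):ℝ)/r = 1 by
          rw [Nat.cast_sub hmr]; field_simp; ring, Real.rpow_one]
      calc ((2*r).choose (2*m) : ℝ) * pbExp n (fun x => g x ^ (2*m) * q x ^ (2*r - 2*m))
          ≤ ((2*r).choose (2*m) : ℝ) *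
            ((N * T0 ^ r) ^ ((m:ℝ)/r) * ((ρ:ℝ)^(r-1) * T1 ^ r) ^ (((r-m:ℕ):ℝ)/r)) := by
            apply mul_le_mul_of_nonneg_left (le_trans hhold hmono) (by positivity)
        _ = (((2*r).choose (2*m) : ℝ) * ((2*r).factorial : ℝ) ^ ((m:ℝ)/r)) *
            (((ρ:ℝ)^(r-1)) ^ ((m:ℝ)/r) * ((ρ:ℝ)^(r-1)) ^ (((r-m:ℕ):ℝ)/r)) *
            (T0 ^ m * T1 ^ (r-m)) := by
            rw [hNsplit, hPsplit]; ring
        _ = (((2*r).choose (2*m) : ℝ) * ((2*r).factorial : ℝ) ^ ((m:ℝ)/r)) *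
            ((ρ:ℝ)^(r-1)) * (T0 ^ m * T1 ^ (r-m)) := by rw [hPP]
        _ ≤ (((2*r).factorial : ℝ) * (r.choose m : ℝ)) *
            ((ρ:ℝ)^(r-1)) * (T0 ^ m * T1 ^ (r-m)) := by
            apply mul_le_mul_of_nonneg_right
              (mul_le_mul_of_nonneg_right (HCcoeff_le hmr hr) hP.le)
              (by positivity)
        _ = N * ((r.choose m : ℝ) * (T0 ^ m * T1 ^ (r-m))) := by
            rw [hNdef]; push_cast; ring
    -- combine
    calc pbExp n (fun x => (∑ I ∈ 𝓖, v I * chi I x) ^ (2*r))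
        = ∑ m ∈ Finset.range (r+1),
          ((2*r).choose (2*m) : ℝ) * pbExp n (fun x => g x ^ (2*m) * q x ^ (2*r - 2*m)) := by
          rw [hbin, heven]
      _ ≤ ∑ m ∈ Finset.range (r+1), N * ((r.choose m : ℝ) * (T0 ^ m * T1 ^ (r-m))) :=
          Finset.sum_le_sum hterm
      _ = N * (T0 + T1) ^ r := by
          rw [add_pow, Finset.mul_sum]
          exact Finset.sum_congr rfl fun m _ => by push_cast; ring
      _ = N * (∑ I ∈ 𝓖, (v I)^2) ^ r := by rw [hT]

end HC

/-- **Hypercontractive Inequality for bounded Fourier width (even integer norms).**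
If `f : {-1,1}^n → ℝ` has Fourier width `ρ ≥ 1`, then for each positive integer `r`,
`‖f‖_{2r} ≤ ((2r)! ρ^{r-1})^{1/(2r)} ‖f‖₂`; equivalently
`E[f(x)^{2r}] ≤ (2r)! ρ^{r-1} E[f(x)^2]^r`. -/
theorem hypercontractive_2r2_width (n ρ : ℕ) (hρ1 : 1 ≤ ρ)
    (𝓕 : Finset (Finset (Fin n)))
    (w : Finset (Fin n) → ℝ) (hw : ∀ I ∈ 𝓕, w I ≠ 0)
    (f : (Fin n → Bool) → ℝ) (hf : ∀ x, f x = ∑ I ∈ 𝓕, w I * chi I x)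
    (hρ : ∀ i : Fin n, (𝓕.filter (fun I => i ∈ I)).card ≤ ρ)
    (r : ℕ) (hr : 0 < r) :
    pbNorm n (2 * r) f ≤
      (((2 * r).factorial * ρ ^ (r - 1) : ℕ) : ℝ) ^ (1 / (2 * r : ℝ)) * pbNorm n 2 f ∧
    pbExp n (fun x => f x ^ (2 * r)) ≤
      (((2 * r).factorial * ρ ^ (r - 1) : ℕ) : ℝ) * (pbExp n (fun x => f x ^ 2)) ^ r := by
  set N : ℝ := (((2 * r).factorial * ρ ^ (r - 1) : ℕ) : ℝ) with hNdef
  have hN0 : 0 ≤ N := by positivity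
  have hpars : pbExp n (fun x => f x ^ 2) = ∑ I ∈ 𝓕, (w I) ^ 2 := by
    rw [HC.pbExp_congr (g₂ := fun x => (∑ I ∈ 𝓕, w I * chi I x) * (∑ J ∈ 𝓕, w J * chi J x))
      (fun x => by rw [hf x, sq]), HC.pbExp_parseval]
    exact Finset.sum_congr rfl fun I _ => (sq (w I)).symm
  have part2 : pbExp n (fun x => f x ^ (2 * r)) ≤ N * (pbExp n (fun x => f x ^ 2)) ^ r := by
    rw [HC.pbExp_congr (g₂ := fun x => (∑ I ∈ 𝓕, w I * chi I x) ^ (2 * r))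
      (fun x => by rw [hf x]), hpars]
    exact HC.main_bound ρ r hρ1 hr Finset.univ 𝓕 (fun I _ => Finset.subset_univ I) hρ w
  have hE2r0 : 0 ≤ pbExp n (fun x => f x ^ (2 * r)) :=
    HC.pbExp_nonneg fun x => by rw [pow_mul]; positivity
  have hE20 : 0 ≤ pbExp n (fun x => f x ^ 2) :=
    HC.pbExp_nonneg fun x => sq_nonneg _
  refine ⟨?_, part2⟩
  unfold pbNorm
  have hrne : ((r:ℝ)) ≠ 0 := by positivity
  have e1 : pbExp n (fun x => |f x| ^ (2 * (r:ℝ))) = pbExp n (fun x => f x ^ (2 * r)) := by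
    apply HC.pbExp_congr
    intro x
    rw [show (2 * (r:ℝ)) = ((2 * r : ℕ) : ℝ) by push_cast; ring, Real.rpow_natCast,
      ← abs_pow, abs_of_nonneg (by rw [pow_mul]; positivity)]
  have e2 : pbExp n (fun x => |f x| ^ (2:ℝ)) = pbExp n (fun x => f x ^ 2) := by
    apply HC.pbExp_congr
    intro x
    rw [show (2:ℝ) = ((2:ℕ):ℝ) by norm_num, Real.rpow_natCast, ← abs_pow,
      abs_of_nonneg (sq_nonneg _)]
  rw [e1, e2]
  calc (pbExp n (fun x => f x ^ (2 * r))) ^ (1 / (2 * (r:ℝ)))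
      ≤ (N * (pbExp n (fun x => f x ^ 2)) ^ r) ^ (1 / (2 * (r:ℝ))) :=
        Real.rpow_le_rpow hE2r0 part2 (by positivity)
    _ = N ^ (1 / (2 * (r:ℝ))) * ((pbExp n (fun x => f x ^ 2)) ^ r) ^ (1 / (2 * (r:ℝ))) :=
        Real.mul_rpow hN0 (by positivity)
    _ = N ^ (1 / (2 * (r:ℝ))) * (pbExp n (fun x => f x ^ 2)) ^ ((1:ℝ)/2) := by
        rw [← Real.rpow_natCast (pbExp n (fun x => f x ^ 2)) r, ← Real.rpow_mul hE20,
          show (r:ℝ) * (1 / (2 * (r:ℝ))) = (1:ℝ)/2 by field_simp]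
    _ = N ^ (1 / (2 * (r:ℝ))) * (pbExp n (fun x => f x ^ 2)) ^ (1/(2:ℝ)) := by norm_num
end

section
/- Let 𝓕 = {I_1, …, I_m} be a family of m distinct subsets of [n] such that every i ∈ [n] belongs to at most ρ sets of 𝓕. Then for every pair of indices p ≠ q with I_p ≠ I_q, the number of pairs (s,t) ∈ [m]^2 such that the symmetric difference I_s Δ I_t equals I_p Δ I_q is at most 2ρ. -/
/-- Let `𝓕 = {I_1, …, I_m}` be a family of `m` distinct subsets of `[n]` such that every
`i ∈ [n]` belongs to at most `ρ` sets of the family. Then for indices `p ≠ q` (so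
`I_p ≠ I_q`), the number of pairs `(s,t)` with `I_s Δ I_t = I_p Δ I_q` is at most `2ρ`. -/
theorem pairs_with_same_symmDiff_le (n m ρ : ℕ)
    (I : Fin m → Finset (Fin n)) (hinj : Function.Injective I)
    (hρ : ∀ i : Fin n, (Finset.univ.filter (fun j => i ∈ I j)).card ≤ ρ)
    (p q : Fin m) (hpq : p ≠ q) (hIpq : I p ≠ I q) :
    (Finset.univ.filter (fun st : Fin m × Fin m =>
        symmDiff (I st.1) (I st.2) = symmDiff (I p) (I q))).card ≤ 2 * ρ := by
  classical
  set D := symmDiff (I p) (I q) with hD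
  have hDne : D.Nonempty := by
    rw [Finset.nonempty_iff_ne_empty]
    intro h
    exact hIpq (by simpa [hD, ← Finset.bot_eq_empty, symmDiff_eq_bot] using h)
  obtain ⟨i, hi⟩ := hDne
  set S := Finset.univ.filter (fun st : Fin m × Fin m =>
      symmDiff (I st.1) (I st.2) = D) with hS
  have hsub : S ⊆ S.filter (fun st => i ∈ I st.1) ∪ S.filter (fun st => i ∈ I st.2) := by
    intro st hst
    have hst' : symmDiff (I st.1) (I st.2) = D := by
      simpa [hS] using hst
    have : i ∈ symmDiff (I st.1) (I st.2) := hst' ▸ hi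
    rw [Finset.mem_symmDiff] at this
    simp only [Finset.mem_union, Finset.mem_filter]
    tauto
  have h1 : (S.filter (fun st => i ∈ I st.1)).card ≤ ρ := by
    refine le_trans (Finset.card_le_card_of_injOn Prod.fst ?_ ?_) (hρ i)
    · intro st hst
      simp only [Finset.mem_coe, Finset.mem_filter] at hst ⊢
      exact ⟨Finset.mem_univ _, hst.2⟩
    · intro st hst st' hst' h
      simp only [Finset.coe_filter, Set.mem_setOf_eq, hS, Finset.mem_filter,
        Finset.mem_univ, true_and] at hst hst'
      have heq : symmDiff (I st.1) (I st'.2) = symmDiff (I st.1) (I st.2) := by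
        rw [h, hst'.1, ← h]; exact hst.1.symm
      have : I st.2 = I st'.2 := (symmDiff_right_injective _ heq.symm)
      exact Prod.ext h (hinj this)
  have h2 : (S.filter (fun st => i ∈ I st.2)).card ≤ ρ := by
    refine le_trans (Finset.card_le_card_of_injOn Prod.snd ?_ ?_) (hρ i)
    · intro st hst
      simp only [Finset.mem_coe, Finset.mem_filter] at hst ⊢
      exact ⟨Finset.mem_univ _, hst.2⟩
    · intro st hst st' hst' h
      simp only [Finset.coe_filter, Set.mem_setOf_eq, hS, Finset.mem_filter,
        Finset.mem_univ, true_and] at hst hst'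
      have heq : symmDiff (I st'.1) (I st.2) = symmDiff (I st.1) (I st.2) := by
        rw [h, hst'.1, ← h]; exact hst.1.symm
      have : I st.1 = I st'.1 := (symmDiff_left_injective _ heq.symm)
      exact Prod.ext (hinj this) h
  calc S.card ≤ _ := Finset.card_le_card hsub
    _ ≤ _ + _ := Finset.card_union_le _ _
    _ ≤ ρ + ρ := add_le_add h1 h2
    _ = 2 * ρ := (two_mul ρ).symm
end

section
/- Let n ≥ 1 and let f : {-1,1}^n → ℝ be defined by f(x) = 1 + Σ_{i=1}^n x_i. Then E[f(x)^2] = n + 1 and E[f(x)^4] = 3n^2 + 4n + 1, so that E[f(x)^4] / E[f(x)^2]^2 = 3 - 2/(n+1). (This shows the coefficient 2ρ + 1 - 2ρ/m in the width-based (4,2)-hypercontractive inequality is attained with equality when ρ = 1 and m = n + 1.) -/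
lemma step (n : ℕ) (k : ℕ) :
    ∑ x : Fin (n+1) → Bool, (∑ i, sgn (x i)) ^ k
      = (∑ x : Fin n → Bool, (1 + ∑ i, sgn (x i)) ^ k)
      + (∑ x : Fin n → Bool, (-1 + ∑ i, sgn (x i)) ^ k) := by
  rw [← Fintype.sum_equiv (Fin.consEquiv fun _ : Fin (n+1) => Bool)
    (fun p : Bool × (Fin n → Bool) => (sgn p.1 + ∑ i, sgn (p.2 i)) ^ k)
    (fun x => (∑ i, sgn (x i)) ^ k)
    (fun p => by simp [Fin.consEquiv, Fin.sum_univ_succ, Fin.cons_zero, Fin.cons_succ])]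
  rw [Fintype.sum_prod_type, Fintype.sum_bool]
  simp [sgn]

lemma powsums (n : ℕ) :
    (∑ x : Fin n → Bool, (∑ i, sgn (x i))) = 0 ∧
    (∑ x : Fin n → Bool, (∑ i, sgn (x i)) ^ 2) = n * 2 ^ n ∧
    (∑ x : Fin n → Bool, (∑ i, sgn (x i)) ^ 3) = 0 ∧
    (∑ x : Fin n → Bool, (∑ i, sgn (x i)) ^ 4) = (3 * n ^ 2 - 2 * n) * 2 ^ n := by
  induction n with
  | zero => simp
  | succ n ih =>
    obtain ⟨h1, h2, h3, h4⟩ := ih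
    have hcard : (Finset.univ : Finset (Fin n → Bool)).card = 2 ^ n := by simp
    have e1 : ∀ s : ℝ, (1 + s) + (-1 + s) = 2 * s := fun s => by ring
    have e2 : ∀ s : ℝ, (1 + s) ^ 2 + (-1 + s) ^ 2 = 2 * s ^ 2 + 2 := fun s => by ring
    have e3 : ∀ s : ℝ, (1 + s) ^ 3 + (-1 + s) ^ 3 = 2 * s ^ 3 + 6 * s := fun s => by ring
    have e4 : ∀ s : ℝ, (1 + s) ^ 4 + (-1 + s) ^ 4 = 2 * s ^ 4 + 12 * s ^ 2 + 2 :=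
      fun s => by ring
    refine ⟨?_, ?_, ?_, ?_⟩
    · have := step n 1
      simp only [pow_one] at this
      rw [this, ← Finset.sum_add_distrib]
      simp_rw [e1]
      rw [← Finset.mul_sum, h1]; ring
    · rw [step n 2, ← Finset.sum_add_distrib]
      simp_rw [e2]
      rw [Finset.sum_add_distrib, ← Finset.mul_sum, h2, Finset.sum_const, hcard]
      push_cast; ring
    · rw [step n 3, ← Finset.sum_add_distrib]
      simp_rw [e3]
      rw [Finset.sum_add_distrib, ← Finset.mul_sum, ← Finset.mul_sum, h3, h1]; ring
    · rw [step n 4, ← Finset.sum_add_distrib]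
      simp_rw [e4]
      rw [Finset.sum_add_distrib, Finset.sum_add_distrib, ← Finset.mul_sum,
        ← Finset.mul_sum, h4, h2, Finset.sum_const, hcard]
      push_cast; ring

/-- For `f(x) = 1 + ∑_{i=1}^n x_i` on `{-1,1}^n` (`n ≥ 1`), one has `E[f(x)^2] = n + 1`,
`E[f(x)^4] = 3n² + 4n + 1`, and hence `E[f(x)^4] / E[f(x)^2]^2 = 3 - 2/(n+1)`, attaining
the coefficient `2ρ + 1 - 2ρ/m` of the width-based (4,2)-hypercontractive inequality
with `ρ = 1`, `m = n + 1`. -/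
theorem sharpness_example_width_one (n : ℕ) (hn : 1 ≤ n)
    (f : (Fin n → Bool) → ℝ) (hf : ∀ x, f x = 1 + ∑ i : Fin n, sgn (x i)) :
    pbExp n (fun x => f x ^ 2) = n + 1 ∧
    pbExp n (fun x => f x ^ 4) = 3 * (n : ℝ) ^ 2 + 4 * n + 1 ∧
    pbExp n (fun x => f x ^ 4) / (pbExp n (fun x => f x ^ 2)) ^ 2 =
      3 - 2 / ((n : ℝ) + 1) := by
  obtain ⟨h1, h2, h3, h4⟩ := powsums n
  have hcard : (Finset.univ : Finset (Fin n → Bool)).card = 2 ^ n := by simp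
  have e2 : ∀ s : ℝ, (1 + s) ^ 2 = s ^ 2 + 2 * s + 1 := fun s => by ring
  have e4 : ∀ s : ℝ, (1 + s) ^ 4 = s ^ 4 + 4 * s ^ 3 + 6 * s ^ 2 + 4 * s + 1 :=
    fun s => by ring
  have two_pos : (0:ℝ) < 2 ^ n := by positivity
  have hE2 : pbExp n (fun x => f x ^ 2) = n + 1 := by
    unfold pbExp
    simp_rw [hf, e2]
    rw [Finset.sum_add_distrib, Finset.sum_add_distrib, ← Finset.mul_sum, h1, h2,
      Finset.sum_const, hcard]
    field_simp
    ring
  have hE4 : pbExp n (fun x => f x ^ 4) = 3 * (n : ℝ) ^ 2 + 4 * n + 1 := by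
    unfold pbExp
    simp_rw [hf, e4]
    rw [Finset.sum_add_distrib, Finset.sum_add_distrib, Finset.sum_add_distrib,
      Finset.sum_add_distrib, ← Finset.mul_sum, ← Finset.mul_sum, ← Finset.mul_sum,
      h1, h2, h3, h4, Finset.sum_const, hcard]
    field_simp
    ring
  refine ⟨hE2, hE4, ?_⟩
  rw [hE2, hE4]
  have hn1 : (n : ℝ) + 1 ≠ 0 := by positivity
  field_simp
  ring
end

section
/- Let X be a real random variable with E[X] = 0 and E[X^4] ≤ b · E[X^2]^2 for some positive constant b, and suppose E[X^2] > 0. Then P(X ≥ (1/2)·√(E[X^2]/b)) > 0. -/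
open MeasureTheory

lemma my_cs2 {α : Type*} [MeasurableSpace α] {μ : Measure α} {f g : α → ℝ}
    (hf0 : 0 ≤ᵐ[μ] f) (hg0 : 0 ≤ᵐ[μ] g) (hf : MemLp f 2 μ) (hg : MemLp g 2 μ) :
    (∫ a, f a * g a ∂μ) ^ 2 ≤ (∫ a, f a ^ 2 ∂μ) * (∫ a, g a ^ 2 ∂μ) := by
  have hpq : Real.HolderConjugate 2 2 := Real.HolderConjugate.two_two
  have hf' : MemLp f (ENNReal.ofReal 2) μ := by
    convert hf using 2; norm_num
  have hg' : MemLp g (ENNReal.ofReal 2) μ := by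
    convert hg using 2; norm_num
  have h := integral_mul_le_Lp_mul_Lq_of_nonneg hpq hf0 hg0 hf' hg'
  have hr : ∀ x : ℝ, x ^ (2 : ℝ) = x ^ 2 := fun x => by
    rw [show (2 : ℝ) = ((2 : ℕ) : ℝ) by norm_num, Real.rpow_natCast]
  simp_rw [hr] at h
  have hA : 0 ≤ ∫ a, f a ^ 2 ∂μ := integral_nonneg fun a => sq_nonneg _
  have hB : 0 ≤ ∫ a, g a ^ 2 ∂μ := integral_nonneg fun a => sq_nonneg _
  have hfg : 0 ≤ ∫ a, f a * g a ∂μ := by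
    apply integral_nonneg_of_ae
    filter_upwards [hf0, hg0] with a ha hb
    exact mul_nonneg ha hb
  rw [← Real.sqrt_eq_rpow, ← Real.sqrt_eq_rpow] at h
  calc (∫ a, f a * g a ∂μ) ^ 2
      ≤ (Real.sqrt (∫ a, f a ^ 2 ∂μ) * Real.sqrt (∫ a, g a ^ 2 ∂μ)) ^ 2 :=
        pow_le_pow_left₀ hfg h 2
    _ = (∫ a, f a ^ 2 ∂μ) * (∫ a, g a ^ 2 ∂μ) := by
        rw [mul_pow, Real.sq_sqrt hA, Real.sq_sqrt hB]

set_option maxHeartbeats 1000000 in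
/-- **Fourth-moment anti-concentration lemma (Alon et al.).**
If `X` is a real random variable with finite fourth moment, `E[X] = 0`,
`E[X⁴] ≤ b · E[X²]²` for a positive constant `b`, and `E[X²] > 0`, then
`P(X ≥ (1/2)·√(E[X²]/b)) > 0`. -/
theorem prob_pos_of_fourth_moment {Ω : Type*} [MeasurableSpace Ω]
    (μ : Measure Ω) [IsProbabilityMeasure μ] (X : Ω → ℝ)
    (hX : MemLp X 4 μ)
    (hmean : ∫ ω, X ω ∂μ = 0)
    (b : ℝ) (hb : 0 < b)
    (hmom : ∫ ω, (X ω) ^ 4 ∂μ ≤ b * (∫ ω, (X ω) ^ 2 ∂μ) ^ 2)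
    (hvar : 0 < ∫ ω, (X ω) ^ 2 ∂μ) :
    0 < μ {ω | (1 / 2) * Real.sqrt ((∫ ω', (X ω') ^ 2 ∂μ) / b) ≤ X ω} := by
  set σ2 : ℝ := ∫ ω, (X ω) ^ 2 ∂μ with hσ2
  set t : ℝ := (1 / 2) * Real.sqrt (σ2 / b) with htdef
  have ht : 0 < t := by
    apply mul_pos (by norm_num)
    exact Real.sqrt_pos.mpr (div_pos hvar hb)
  have ht2 : t ^ 2 = σ2 / (4 * b) := by
    rw [htdef, mul_pow, Real.sq_sqrt (le_of_lt (div_pos hvar hb))]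
    ring
  by_contra hcon
  have h0 : μ {ω | t ≤ X ω} = 0 := le_antisymm (not_lt.mp hcon) (zero_le')
  have hae : ∀ᵐ ω ∂μ, X ω < t := by
    rw [ae_iff]; simpa [not_lt] using h0
  -- positive and negative parts
  set Y : Ω → ℝ := fun ω => max (X ω) 0 with hYdef
  set Z : Ω → ℝ := fun ω => max (-X ω) 0 with hZdef
  have hXm : AEStronglyMeasurable X μ := hX.1
  have hYm : AEStronglyMeasurable Y μ := hXm.sup aestronglyMeasurable_const
  have hZm : AEStronglyMeasurable Z μ := hXm.neg.sup aestronglyMeasurable_const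
  have hY0 : ∀ ω, 0 ≤ Y ω := fun ω => le_max_right _ _
  have hZ0 : ∀ ω, 0 ≤ Z ω := fun ω => le_max_right _ _
  have hYabs : ∀ ω, Y ω ≤ |X ω| := fun ω => max_le (le_abs_self _) (abs_nonneg _)
  have hZabs : ∀ ω, Z ω ≤ |X ω| := fun ω => max_le (neg_le_abs _) (abs_nonneg _)
  have hY4 : MemLp Y 4 μ := by
    refine MemLp.of_le hX hYm (Filter.Eventually.of_forall fun ω => ?_)
    rw [Real.norm_eq_abs, Real.norm_eq_abs, abs_of_nonneg (hY0 ω)]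
    exact hYabs ω
  have hZ4 : MemLp Z 4 μ := by
    refine MemLp.of_le hX hZm (Filter.Eventually.of_forall fun ω => ?_)
    rw [Real.norm_eq_abs, Real.norm_eq_abs, abs_of_nonneg (hZ0 ω)]
    exact hZabs ω
  -- integrability
  have iX4 : Integrable (fun ω => X ω ^ 4) μ := by
    have := hX.integrable_norm_rpow (by norm_num) (by norm_num)
    refine this.congr (Filter.Eventually.of_forall fun ω => ?_)
    simp only [Real.norm_eq_abs, ENNReal.toReal_ofNat]
    rw [show ((4:ℝ)) = ((4:ℕ):ℝ) by norm_num, Real.rpow_natCast, ← abs_pow,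
      abs_of_nonneg (by positivity)]
  have iZ4 : Integrable (fun ω => Z ω ^ 4) μ := by
    have := hZ4.integrable_norm_rpow (by norm_num) (by norm_num)
    refine this.congr (Filter.Eventually.of_forall fun ω => ?_)
    simp only [Real.norm_eq_abs, ENNReal.toReal_ofNat]
    rw [show ((4:ℝ)) = ((4:ℕ):ℝ) by norm_num, Real.rpow_natCast, ← abs_pow,
      abs_of_nonneg (by positivity)]
  have iX1 : Integrable X μ := hX.integrable (by norm_num)
  have iY1 : Integrable Y μ := hY4.integrable (by norm_num)
  have iZ1 : Integrable Z μ := hZ4.integrable (by norm_num)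
  have iY2 : Integrable (fun ω => Y ω ^ 2) μ :=
    (hY4.mono_exponent (by norm_num)).integrable_sq
  have iZ2 : Integrable (fun ω => Z ω ^ 2) μ :=
    (hZ4.mono_exponent (by norm_num)).integrable_sq
  have iZ3 : Integrable (fun ω => Z ω ^ 3) μ := by
    refine (iZ4.add (integrable_const 1)).mono'
      ((hZm.pow 3)) (Filter.Eventually.of_forall fun ω => ?_)
    simp only [Pi.add_apply, Real.norm_eq_abs]
    rw [abs_of_nonneg (by positivity : (0:ℝ) ≤ Z ω ^ 3)]
    have h0 := hZ0 ω
    nlinarith [sq_nonneg (Z ω ^ 2 - Z ω), sq_nonneg (Z ω - 1), sq_nonneg (Z ω)]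
  -- m := E Y = E Z
  set m : ℝ := ∫ ω, Y ω ∂μ with hmdef
  have hm0 : 0 ≤ m := integral_nonneg hY0
  have hmZ : ∫ ω, Z ω ∂μ = m := by
    have hsub : ∫ ω, (Y ω - Z ω) ∂μ = 0 := by
      rw [show (fun ω => Y ω - Z ω) = X from funext fun ω => by
        simp only [hYdef, hZdef]
        rcases le_total (X ω) 0 with h | h
        · rw [max_eq_right h, max_eq_left (by linarith)]; ring
        · rw [max_eq_left h, max_eq_right (by linarith)]; ring]
      exact hmean
    rw [integral_sub iY1 iZ1] at hsub
    linarith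
  -- m ≤ t
  have hYt : ∀ᵐ ω ∂μ, Y ω ≤ t := by
    filter_upwards [hae] with ω hω
    exact max_le hω.le ht.le
  have hmt : m ≤ t := by
    have := integral_mono_ae iY1 (integrable_const t) hYt
    simpa using this
  -- A + B = σ2
  set A : ℝ := ∫ ω, Y ω ^ 2 ∂μ with hAdef
  set B : ℝ := ∫ ω, Z ω ^ 2 ∂μ with hBdef
  have hABσ : A + B = σ2 := by
    rw [hAdef, hBdef, ← integral_add iY2 iZ2]
    refine integral_congr_ae (Filter.Eventually.of_forall fun ω => ?_)
    simp only [hYdef, hZdef]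
    rcases le_total (X ω) 0 with h | h
    · rw [max_eq_right h, max_eq_left (by linarith)]; ring
    · rw [max_eq_left h, max_eq_right (by linarith)]; ring
  -- A ≤ t * m
  have hAtm : A ≤ t * m := by
    have hpt : ∀ᵐ ω ∂μ, Y ω ^ 2 ≤ t * Y ω := by
      filter_upwards [hYt] with ω hω
      have := hY0 ω
      nlinarith
    have := integral_mono_ae iY2 (iY1.const_mul t) hpt
    rwa [integral_const_mul] at this
  -- C-S 1 : B^2 ≤ m * C
  set C : ℝ := ∫ ω, Z ω ^ 3 ∂μ with hCdef
  set D : ℝ := ∫ ω, Z ω ^ 4 ∂μ with hDdef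
  have hC0 : 0 ≤ C := integral_nonneg fun ω => by positivity
  have hD0 : 0 ≤ D := integral_nonneg fun ω => by positivity
  have hB0 : 0 ≤ B := integral_nonneg fun ω => sq_nonneg _
  have hsqm : AEStronglyMeasurable (fun ω => Real.sqrt (Z ω)) μ :=
    Real.continuous_sqrt.comp_aestronglyMeasurable hZm
  have hcs1 : B ^ 2 ≤ m * C := by
    have h := my_cs2 (f := fun ω => Real.sqrt (Z ω))
      (g := fun ω => Z ω * Real.sqrt (Z ω)) (μ := μ)
      (Filter.Eventually.of_forall fun ω => Real.sqrt_nonneg _)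
      (Filter.Eventually.of_forall fun ω => mul_nonneg (hZ0 ω) (Real.sqrt_nonneg _))
      ((memLp_two_iff_integrable_sq hsqm).mpr
        (iZ1.congr (Filter.Eventually.of_forall fun ω =>
          (Real.sq_sqrt (hZ0 ω)).symm)))
      ((memLp_two_iff_integrable_sq (hZm.mul hsqm)).mpr
        (iZ3.congr (Filter.Eventually.of_forall fun ω => by
          show Z ω ^ 3 = (Z ω * Real.sqrt (Z ω)) ^ 2
          rw [mul_pow, Real.sq_sqrt (hZ0 ω)]; ring)))
    beta_reduce at h
    have e1 : ∫ ω, Real.sqrt (Z ω) * (Z ω * Real.sqrt (Z ω)) ∂μ = B := by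
      rw [hBdef]
      refine integral_congr_ae (Filter.Eventually.of_forall fun ω => ?_)
      show Real.sqrt (Z ω) * (Z ω * Real.sqrt (Z ω)) = Z ω ^ 2
      rw [show Real.sqrt (Z ω) * (Z ω * Real.sqrt (Z ω))
          = Z ω * (Real.sqrt (Z ω) * Real.sqrt (Z ω)) by ring,
        Real.mul_self_sqrt (hZ0 ω)]
      ring
    have e2 : ∫ ω, Real.sqrt (Z ω) ^ 2 ∂μ = m := by
      rw [← hmZ]
      refine integral_congr_ae (Filter.Eventually.of_forall fun ω => ?_)
      show Real.sqrt (Z ω) ^ 2 = Z ω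
      exact Real.sq_sqrt (hZ0 ω)
    have e3 : ∫ ω, (Z ω * Real.sqrt (Z ω)) ^ 2 ∂μ = C := by
      rw [hCdef]
      refine integral_congr_ae (Filter.Eventually.of_forall fun ω => ?_)
      show (Z ω * Real.sqrt (Z ω)) ^ 2 = Z ω ^ 3
      rw [mul_pow, Real.sq_sqrt (hZ0 ω)]; ring
    rw [e1, e2, e3] at h
    exact h
  -- C-S 2 : C^2 ≤ B * D
  have hcs2 : C ^ 2 ≤ B * D := by
    have h := my_cs2 (f := Z) (g := fun ω => Z ω ^ 2) (μ := μ)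
      (Filter.Eventually.of_forall hZ0)
      (Filter.Eventually.of_forall fun ω => sq_nonneg _)
      (hZ4.mono_exponent (by norm_num))
      ((memLp_two_iff_integrable_sq (hZm.pow 2)).mpr
        (iZ4.congr (Filter.Eventually.of_forall fun ω => by
          show Z ω ^ 4 = ((fun ω => Z ω ^ 2) ω) ^ 2; ring)))
    beta_reduce at h
    have e1 : ∫ ω, Z ω * Z ω ^ 2 ∂μ = C := by
      rw [hCdef]
      refine integral_congr_ae (Filter.Eventually.of_forall fun ω => ?_)
      show Z ω * Z ω ^ 2 = Z ω ^ 3; ring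
    have e2 : ∫ ω, (Z ω ^ 2) ^ 2 ∂μ = D := by
      rw [hDdef]
      refine integral_congr_ae (Filter.Eventually.of_forall fun ω => ?_)
      show (Z ω ^ 2) ^ 2 = Z ω ^ 4; ring
    rw [e1, e2] at h
    exact h
  -- D ≤ b * σ2^2
  have hDle : D ≤ b * σ2 ^ 2 := by
    refine le_trans ?_ hmom
    refine integral_mono_ae iZ4 iX4 (Filter.Eventually.of_forall fun ω => ?_)
    calc Z ω ^ 4 ≤ |X ω| ^ 4 := pow_le_pow_left₀ (hZ0 ω) (hZabs ω) 4
      _ = X ω ^ 4 := by rw [← abs_pow, abs_of_nonneg (by positivity)]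
  -- b ≥ 1
  have hb1 : 1 ≤ b := by
    have hX2m : AEStronglyMeasurable (fun ω => X ω ^ 2) μ := hXm.pow 2
    have h := my_cs2 (f := fun ω => X ω ^ 2) (g := fun _ => (1 : ℝ)) (μ := μ)
      (Filter.Eventually.of_forall fun ω => sq_nonneg _)
      (Filter.Eventually.of_forall fun _ => zero_le_one)
      ((memLp_two_iff_integrable_sq hX2m).mpr
        (iX4.congr (Filter.Eventually.of_forall fun ω => by
          show X ω ^ 4 = ((fun ω => X ω ^ 2) ω) ^ 2; ring)))
      (memLp_const 1)
    beta_reduce at h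
    simp only [mul_one, one_pow] at h
    have e1 : ∫ ω, (X ω ^ 2) ^ 2 ∂μ = ∫ ω, X ω ^ 4 ∂μ := by
      refine integral_congr_ae (Filter.Eventually.of_forall fun ω => ?_)
      show (X ω ^ 2) ^ 2 = X ω ^ 4; ring
    have e2 : ∫ (_ : Ω), (1 : ℝ) ∂μ = 1 := by simp
    rw [e1, e2, mul_one] at h
    -- h : σ2^2 ≤ ∫ X^4 ≤ b σ2^2
    nlinarith [lt_of_lt_of_le (by positivity : (0:ℝ) < σ2 ^ 2) (h.trans hmom)]
  -- endgame
  have hAle : A ≤ σ2 / 4 := by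
    have h1 : A ≤ t * t := le_trans hAtm (mul_le_mul_of_nonneg_left hmt ht.le)
    have h2 : t * t = σ2 / (4 * b) := by rw [← ht2]; ring
    rw [h2] at h1
    have : σ2 / (4 * b) ≤ σ2 / 4 := by
      apply div_le_div_of_nonneg_left hvar.le (by norm_num)
      linarith
    linarith
  have hBge : 3 / 4 * σ2 ≤ B := by linarith
  have hBpos : 0 < B := by linarith
  have hB3 : B ^ 3 ≤ σ2 ^ 3 / 4 := by
    have h1 : B ^ 4 ≤ m ^ 2 * (B * D) := by
      calc B ^ 4 = (B ^ 2) ^ 2 := by ring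
        _ ≤ (m * C) ^ 2 := pow_le_pow_left₀ (sq_nonneg _) hcs1 2
        _ = m ^ 2 * C ^ 2 := by ring
        _ ≤ m ^ 2 * (B * D) := mul_le_mul_of_nonneg_left hcs2 (sq_nonneg m)
    have h2 : B * B ^ 3 ≤ B * (m ^ 2 * D) := by
      calc B * B ^ 3 = B ^ 4 := by ring
        _ ≤ m ^ 2 * (B * D) := h1
        _ = B * (m ^ 2 * D) := by ring
    have h3 : B ^ 3 ≤ m ^ 2 * D := le_of_mul_le_mul_left h2 hBpos
    have h4 : m ^ 2 ≤ t ^ 2 := pow_le_pow_left₀ hm0 hmt 2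
    have h5 : m ^ 2 * D ≤ t ^ 2 * (b * σ2 ^ 2) := by
      apply mul_le_mul h4 hDle hD0 (sq_nonneg t)
    have h6 : t ^ 2 * (b * σ2 ^ 2) = σ2 ^ 3 / 4 := by
      rw [ht2]; field_simp
    linarith
  have hB3' : 27 / 64 * σ2 ^ 3 ≤ B ^ 3 := by
    calc 27 / 64 * σ2 ^ 3 = (3 / 4 * σ2) ^ 3 := by ring
      _ ≤ B ^ 3 := pow_le_pow_left₀ (by positivity) hBge 3
  nlinarith [pow_pos hvar 3]
end
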